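/- arXiv:2302.03797 — 6 statements merged into one kernel-verified Lean document; each statement's English description precedes it below -/
import Mathlib

section
/- Performing a symmetric reversal on a chromosome preserves its multiset of adjacencies. That is, if π' is obtained from π by a symmetric reversal, then A[π] = A[π']. -/
open List

variable {α : Type*}

/-- A signed symbol: (name, orientation); `true` means positive. -/
abbrev SSym (α : Type*) := α × Bool

/-- Negation (orientation flip) of a signed symbol. -/
def symNeg (x : SSym α) : SSym α := (x.1, !x.2)

/-- Left node of an occurrence: a node `(a, true)` denotes the head `aʰ`,
and `(a, false)` denotes the tail `aᵗ`; a positive occurrence contributes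
`(aʰ, aᵗ)`, a negative one `(aᵗ, aʰ)`. -/
def lnode (x : SSym α) : SSym α := x

/-- Right node of an occurrence. -/
def rnode (x : SSym α) : SSym α := (x.1, !x.2)

/-- The unordered adjacency between two consecutive occurrences. -/
def adjOf (u v : SSym α) : Multiset (SSym α) := {rnode u, lnode v}

/-- The multiset of adjacencies of a chromosome. -/
def adjMS : List (SSym α) → Multiset (Multiset (SSym α))
  | u :: v :: rest => adjOf u v ::ₘ adjMS (v :: rest)
  | _ => 0

/-- Reversed and negated form of a segment. -/
def revneg (s : List (SSym α)) : List (SSym α) := (s.map symNeg).reverse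

/-- One symmetric reversal: the reversed segment is flanked by a pair of
inverted occurrences of the same repeat. -/
def SymRev (π π' : List (SSym α)) : Prop :=
  ∃ (p m q : List (SSym α)) (x : SSym α),
    π = p ++ x :: m ++ symNeg x :: q ∧
    π' = p ++ x :: revneg m ++ symNeg x :: q

/-- A symmetric reversal performed on the repeat `a`. -/
def SymRevOn (a : α) (π π' : List (SSym α)) : Prop :=
  ∃ (p m q : List (SSym α)) (x : SSym α), x.1 = a ∧
    π = p ++ x :: m ++ symNeg x :: q ∧
    π' = p ++ x :: revneg m ++ symNeg x :: q

/-- `π` can be transformed into `τ` by a series of symmetric reversals. -/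
def Transformable (π τ : List (SSym α)) : Prop := Relation.ReflTransGen SymRev π τ

/-- `π` can be transformed into `τ` by exactly `m` symmetric reversals. -/
def ChainRev : ℕ → List (SSym α) → List (SSym α) → Prop
  | 0, π, τ => π = τ
  | n + 1, π, τ => ∃ π', SymRev π π' ∧ ChainRev n π' τ

/-- A chromosome is flanked by `+r₀` and `-r₀`. -/
def IsChromosome (r₀ : α) (π : List (SSym α)) : Prop :=
  ∃ m : List (SSym α), π = (r₀, true) :: m ++ [(r₀, false)]

/-- Duplication number of symbol `a` in `π` (occurrences in both orientations). -/
def dpCount [DecidableEq α] (a : α) (π : List (SSym α)) : ℕ := (π.map Prod.fst).count a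

/-- Related chromosomes: identical duplication numbers for every gene/repeat. -/
def Related [DecidableEq α] (π τ : List (SSym α)) : Prop := ∀ a, dpCount a π = dpCount a τ

/-- A chromosome is simple if every adjacency appears only once. -/
def Simple [DecidableEq α] (π : List (SSym α)) : Prop := ∀ A, (adjMS π).count A ≤ 1

/-- Deletion of all occurrences of the repeat `b`. -/
def delSym [DecidableEq α] (b : α) (π : List (SSym α)) : List (SSym α) :=
  π.filter fun x => decide (x.1 ≠ b)

/-- The repeat `a` is neighbor-consistent: the two adjacencies flanking any of its
occurrences in `π` are matched to the two adjacencies flanking a single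
occurrence of `a` in `τ`. -/
def NeighborConsistent (π τ : List (SSym α)) (a : α) : Prop :=
  ∀ (p q : List (SSym α)) (u x v : SSym α),
    π = p ++ u :: x :: v :: q → x.1 = a →
    ∃ (p' q' : List (SSym α)) (u' y v' : SSym α),
      τ = p' ++ u' :: y :: v' :: q' ∧ y.1 = a ∧
      ({adjOf u x, adjOf x v} : Multiset (Multiset (SSym α))) =
        {adjOf u' y, adjOf y v'}

/-- The repeat `a` is black in `IG(π, τ)`: its two occurrences in `π`
have opposite signs. -/
def Black (π : List (SSym α)) (a : α) : Prop :=
  ∃ (p q r : List (SSym α)) (x y : SSym α),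
    π = p ++ x :: q ++ y :: r ∧ x.1 = a ∧ y.1 = a ∧ x.2 ≠ y.2

/-- The occurrence intervals of the repeats `a` and `b` interleave in `π`
(the adjacency relation of the intersection graph `IG(π, τ)`). -/
def Interleaves (π : List (SSym α)) (a b : α) : Prop :=
  a ≠ b ∧ ∃ (p q r s t : List (SSym α)) (x y x' y' : SSym α),
    x.1 = a ∧ x'.1 = a ∧ y.1 = b ∧ y'.1 = b ∧
    (π = p ++ x :: q ++ y :: r ++ x' :: s ++ y' :: t ∨
     π = p ++ y :: q ++ x :: r ++ y' :: s ++ x' :: t)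

/-- Two repeats are in the same connected component of the intersection graph. -/
def InSameComponent (π : List (SSym α)) : α → α → Prop :=
  Relation.ReflTransGen (Interleaves π)

/-- An abstract vertex-colored, vertex-weighted graph (intersection graph). -/
structure ColoredGraph (V : Type*) where
  adj : V → V → Prop
  black : V → Prop
  weight : V → ℕ

/-- The effect of performing a symmetric reversal on a black vertex `x`:
(rule-I) the colors of all neighbors of `x` are toggled; (rule-II) adjacency
among the neighbors of `x` is complemented; (rule-III) the weight of `x`
is decremented (and `x` is deleted when the weight reaches `0`). -/
def reverseAt {V : Type*} [DecidableEq V] (G : ColoredGraph V) (x : V) :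
    ColoredGraph V where
  adj u v := (G.adj x u ∧ G.adj x v ∧ ¬ G.adj u v ∧ u ≠ v) ∨
    (¬ (G.adj x u ∧ G.adj x v) ∧ G.adj u v)
  black v := (G.adj x v ∧ ¬ G.black v) ∨ (¬ G.adj x v ∧ G.black v)
  weight v := if v = x then G.weight v - 1 else G.weight v

/-- Reachability in a colored graph avoiding deleted (`dead`) vertices. -/
def Reach {V : Type*} (G : ColoredGraph V) (dead : V → Prop) : V → V → Prop :=
  Relation.ReflTransGen (fun u v => G.adj u v ∧ ¬ dead u ∧ ¬ dead v)

/-- The 2-balanced condition: any two occurrences of the same repeat in `τ`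
have opposite signs. -/
def BalancedTarget (τ : List (SSym α)) : Prop :=
  ∀ (p q r : List (SSym α)) (x y : SSym α),
    τ = p ++ x :: q ++ y :: r → x.1 = y.1 → x.2 ≠ y.2

/-- The adjacency `⟨u, v⟩` of `π` is positive: it is matched to an adjacency
`⟨y_j, y_{j+1}⟩` of `τ` with `r(u) = r(y_j)` and `l(v) = l(y_{j+1})`, i.e.
`τ` contains the consecutive pair `u v` literally. -/
def PosIn (τ : List (SSym α)) (u v : SSym α) : Prop :=
  ∃ p q : List (SSym α), τ = p ++ u :: v :: q

/-- The adjacency `⟨u, v⟩` of `π` is negative: `τ` contains its reversed and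
negated form. -/
def NegIn (τ : List (SSym α)) (u v : SSym α) : Prop := PosIn τ (symNeg v) (symNeg u)

/-- Positive and not entangled. -/
def StrictPos (τ : List (SSym α)) (u v : SSym α) : Prop := PosIn τ u v ∧ ¬ NegIn τ u v

/-- Negative and not entangled. -/
def StrictNeg (τ : List (SSym α)) (u v : SSym α) : Prop := NegIn τ u v ∧ ¬ PosIn τ u v

/-- An entangled adjacency can be read both positively and negatively. -/
def EntangledAdj (τ : List (SSym α)) (u v : SSym α) : Prop := PosIn τ u v ∧ NegIn τ u v

/-- The occurrence `x` (with left neighbor `w` and right neighbor `v`) is a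
boundary: its left and right adjacencies have distinct directions. -/
def IsBoundary (τ : List (SSym α)) (w x v : SSym α) : Prop :=
  (StrictPos τ w x ∧ StrictNeg τ x v) ∨ (StrictNeg τ w x ∧ StrictPos τ x v)

/-- The list of consecutive pairs (adjacencies) of a chromosome. -/
def pairsOf (π : List (SSym α)) : List (SSym α × SSym α) := π.zip π.tail

/-- A direction assignment (`true` = positive) compatible with the bijection
between the adjacencies of `π` and `τ`. -/
def DirOK (τ π : List (SSym α)) (d : List Bool) : Prop :=
  List.Forall₂ (fun (pr : SSym α × SSym α) (b : Bool) =>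
    (b = true → PosIn τ pr.1 pr.2) ∧ (b = false → NegIn τ pr.1 pr.2)) (pairsOf π) d

/-- Number of maximal `false`-runs (maximal negative segments). -/
def nMNSAux : Bool → List Bool → ℕ
  | _, [] => 0
  | prev, b :: rest => (if prev = true ∧ b = false then 1 else 0) + nMNSAux b rest

def nMNS (d : List Bool) : ℕ := nMNSAux true d

/-- `N_MNS[π]`: the number of maximal negative segments of `π` relative to `τ`
(entangled adjacencies assigned so that the number of MNS is minimized,
i.e. taking the common direction of their neighbors). -/
noncomputable def NMNS (π τ : List (SSym α)) : ℕ :=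
  sInf { n | ∃ d : List Bool, DirOK τ π d ∧ n = nMNS d }

/-- A node position of the alternative-cycle graph: `(i, false)` is the left
node of the `i`-th occurrence of `π`, `(i, true)` its right node. -/
abbrev NodePos := ℕ × Bool

/-- The value (as a node of the form `aʰ`/`aᵗ`) sitting at a node position. -/
def nodeVal (π : List (SSym α)) (p : NodePos) : Option (SSym α) :=
  (π[p.1]?).map fun x => if p.2 then rnode x else lnode x

/-- The adjacency of `π` between positions `i` and `i+1`, if any. -/
def adjAt (π : List (SSym α)) (i : ℕ) : Option (Multiset (SSym α)) :=
  match π[i]?, π[i+1]? with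
  | some u, some v => some (adjOf u v)
  | _, _ => none

/-- `f` is a bijection matching each adjacency of `τ` with an identical
adjacency of `π`. -/
def AdjBijection (π τ : List (SSym α)) (f : ℕ → ℕ) : Prop :=
  Set.BijOn f (Set.Iio (τ.length - 1)) (Set.Iio (π.length - 1)) ∧
  ∀ k < τ.length - 1, adjAt τ k = adjAt π (f k)

/-- The blue edge of `ACG(π, τ, f)` corresponding to the `k`-th occurrence of
`τ`: it joins the node of the `f`-image of the adjacency on the left of `y_k`
carrying the value `l(y_k)` with the node of the `f`-image of the adjacency on
the right of `y_k` carrying the value `r(y_k)`. -/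
def IsBlueEdge (π τ : List (SSym α)) (f : ℕ → ℕ) (k : ℕ) (e₁ e₂ : NodePos) : Prop :=
  ∃ y : SSym α, τ[k]? = some y ∧
    (if k = 0 then e₁ = (0, false)
     else (e₁ = (f (k-1), true) ∨ e₁ = (f (k-1) + 1, false)) ∧
       nodeVal π e₁ = some (lnode y)) ∧
    (if k = τ.length - 1 then e₂ = (π.length - 1, true)
     else (e₂ = (f k, true) ∨ e₂ = (f k + 1, false)) ∧
       nodeVal π e₂ = some (rnode y))

/-- A green edge joins `r(x_i)` and `l(x_{i+1})` (an adjacency of `π`). -/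
def GreenEdge (p q : NodePos) : Prop :=
  (p.2 = true ∧ q = (p.1 + 1, false)) ∨ (q.2 = true ∧ p = (q.1 + 1, false))

/-- A step along a blue or a green edge. -/
def BGStep (π τ : List (SSym α)) (f : ℕ → ℕ) (p q : NodePos) : Prop :=
  GreenEdge p q ∨ ∃ k, IsBlueEdge π τ f k p q ∨ IsBlueEdge π τ f k q p


lemma adjMS_split (l : List (SSym α)) (u : SSym α) (r : List (SSym α)) :
    adjMS (l ++ u :: r) = adjMS (l ++ [u]) + adjMS (u :: r) := by
  induction l with
  | nil => simp [adjMS]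
  | cons a l ih =>
    cases l with
    | nil => simp [adjMS]
    | cons b l' =>
      have h1 : (a :: b :: l') ++ u :: r = a :: ((b :: l') ++ u :: r) := by simp
      have h2 : (a :: b :: l') ++ [u] = a :: ((b :: l') ++ [u]) := by simp
      rw [h1, h2]
      have e1 : adjMS (a :: ((b :: l') ++ u :: r)) =
          adjOf a b ::ₘ adjMS ((b :: l') ++ u :: r) := by simp [adjMS]
      have e2 : adjMS (a :: ((b :: l') ++ [u])) =
          adjOf a b ::ₘ adjMS ((b :: l') ++ [u]) := by simp [adjMS]
      rw [e1, e2, ih, Multiset.cons_add]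

lemma adjOf_symNeg (u v : SSym α) :
    adjOf (symNeg v) (symNeg u) = adjOf u v := by
  show (((v.1, !!v.2) : SSym α) ::ₘ {(u.1, !u.2)}) = ((u.1, !u.2) ::ₘ {(v.1, v.2)})
  rw [Bool.not_not]
  exact Multiset.cons_swap _ _ _

lemma adjMS_revneg (l : List (SSym α)) (u v : SSym α) :
    adjMS (u :: l ++ [v]) = adjMS (symNeg v :: revneg l ++ [symNeg u]) := by
  induction l generalizing u v with
  | nil => simp [adjMS, revneg, adjOf_symNeg]
  | cons a l ih =>
    have e1 : adjMS (u :: a :: l ++ [v]) =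
        adjOf u a ::ₘ adjMS (a :: l ++ [v]) := by simp [adjMS]
    have h2 : symNeg v :: revneg (a :: l) ++ [symNeg u] =
        (symNeg v :: revneg l) ++ symNeg a :: [symNeg u] := by
      simp [revneg]
    have hs := adjMS_split (symNeg v :: revneg l) (symNeg a) [symNeg u]
    have e2 : adjMS [symNeg a, symNeg u] = {adjOf u a} := by
      show adjOf (symNeg a) (symNeg u) ::ₘ adjMS [symNeg u] = _
      rw [adjOf_symNeg]; rfl
    rw [e1, h2, hs, e2]
    have h3 : (symNeg v :: revneg l) ++ [symNeg a] = symNeg v :: revneg l ++ [symNeg a] := by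
      simp
    rw [h3, ← ih a v, add_comm]
    rfl

lemma symNeg_symNeg (x : SSym α) : symNeg (symNeg x) = x := by
  simp [symNeg]

/-- a symmetric reversal preserves the multiset of adjacencies. -/
theorem adjMS_eq_of_symRev (π π' : List (SSym α)) (h : SymRev π π') :
    adjMS π = adjMS π' := by
  obtain ⟨p, m, q, x, h1, h2⟩ := h
  subst h1 h2
  have key : ∀ mm : List (SSym α),
      adjMS (p ++ x :: mm ++ symNeg x :: q) =
        adjMS (p ++ [x]) + adjMS (x :: mm ++ [symNeg x]) + adjMS (symNeg x :: q) := by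
    intro mm
    have s1 := adjMS_split p x (mm ++ symNeg x :: q)
    have s2 := adjMS_split (x :: mm) (symNeg x) q
    rw [show p ++ x :: mm ++ symNeg x :: q = p ++ x :: (mm ++ symNeg x :: q) from by simp,
      s1]
    rw [show x :: (mm ++ symNeg x :: q) = (x :: mm) ++ symNeg x :: q from by simp, s2]
    simp [add_assoc]
  rw [key, key]
  have : adjMS (x :: m ++ [symNeg x]) = adjMS (x :: revneg m ++ [symNeg x]) := by
    have := adjMS_revneg m x (symNeg x)
    rwa [symNeg_symNeg] at this
  rw [this]
end

section
/- Deleting a redundant repeat preserves sortability: let π and τ be chromosomes with A[π] = A[τ] and let |x_i|, |x_{i+1}| be two redundant repeats in π (the adjacency between them appears twice, with the two occurrences of |x_{i+1}| always immediately following/preceding the corresponding occurrences of |x_i| in the same relative orientation). Let π' and τ' be obtained by deleting both occurrences of |x_{i+1}| from π and τ respectively. Then π can be transformed into τ by symmetric reversals if and only if π' can be transformed into τ' by symmetric reversals. -/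
open List

variable {α : Type*}

namespace RedundantDel

variable {α : Type*}

@[simp] lemma symNeg_symNeg (e : SSym α) : symNeg (symNeg e) = e := by
  cases e with | mk c s => simp [symNeg]

@[simp] lemma symNeg_fst (e : SSym α) : (symNeg e).1 = e.1 := rfl

lemma symNeg_ne (e : SSym α) : symNeg e ≠ e := by
  cases e with | mk c s => simp [symNeg]

lemma symNeg_inj {e f : SSym α} (h : symNeg e = symNeg f) : e = f := by
  have := congrArg symNeg h; simpa using this

lemma ne_of_fst_ne {e f : SSym α} (h : e.1 ≠ f.1) : e ≠ f := fun hh => h (by rw [hh])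

@[simp] lemma revneg_nil : revneg ([] : List (SSym α)) = [] := rfl

lemma revneg_append (s t : List (SSym α)) : revneg (s ++ t) = revneg t ++ revneg s := by
  simp [revneg]

lemma revneg_cons (c : SSym α) (s : List (SSym α)) :
    revneg (c :: s) = revneg s ++ [symNeg c] := by simp [revneg]

lemma revneg_singleton (c : SSym α) : revneg [c] = [symNeg c] := rfl

section Dec
variable [DecidableEq α]

/-- The gluing block. -/
def blk (x x' e : SSym α) : List (SSym α) :=
  if e = x then [x, x'] else if e = symNeg x then [symNeg x', symNeg x] else [e]

/-- Gluing the deleted repeat back. -/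
def glue (x x' : SSym α) (w : List (SSym α)) : List (SSym α) := w.flatMap (blk x x')

lemma blk_x (x x' : SSym α) : blk x x' x = [x, x'] := if_pos rfl

lemma blk_nx (x x' : SSym α) : blk x x' (symNeg x) = [symNeg x', symNeg x] := by
  rw [blk, if_neg (symNeg_ne _), if_pos rfl]

lemma blk_other {x e : SSym α} (x' : SSym α) (h1 : e ≠ x) (h2 : e ≠ symNeg x) :
    blk x x' e = [e] := by rw [blk, if_neg h1, if_neg h2]

@[simp] lemma glue_nil (x x' : SSym α) : glue x x' [] = [] := rfl

lemma glue_cons (x x' e : SSym α) (w : List (SSym α)) :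
    glue x x' (e :: w) = blk x x' e ++ glue x x' w := rfl

lemma glue_append (x x' : SSym α) (w₁ w₂ : List (SSym α)) :
    glue x x' (w₁ ++ w₂) = glue x x' w₁ ++ glue x x' w₂ := by simp [glue]

lemma blk_symNeg (x x' e : SSym α) : blk x x' (symNeg e) = revneg (blk x x' e) := by
  by_cases h1 : e = x
  · subst h1; rw [blk_x, blk, if_neg (symNeg_ne _), if_pos rfl]
    simp [revneg]
  · by_cases h2 : e = symNeg x
    · subst h2; rw [blk_nx, symNeg_symNeg, blk_x]
      simp [revneg]
    · rw [blk_other x' h1 h2, blk_other x' (fun h => h2 (by rw [← h, symNeg_symNeg]))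
        (fun h => h1 (symNeg_inj h)), revneg_singleton]

lemma revneg_glue (x x' : SSym α) (w : List (SSym α)) :
    revneg (glue x x' w) = glue x x' (revneg w) := by
  induction w with
  | nil => rfl
  | cons e w ih =>
    rw [glue_cons, revneg_append, revneg_cons, glue_append, ih]
    simp [glue, blk_symNeg]

end Dec
end RedundantDel
namespace RedundantDel
variable {α : Type*}
section Dec
variable [DecidableEq α]
set_option linter.unusedSectionVars false

/-- `w` avoids the name `b`. -/
def NoB (b : α) (w : List (SSym α)) : Prop := ∀ e ∈ w, e.1 ≠ b

lemma NoB_append {b : α} {w₁ w₂ : List (SSym α)} :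
    NoB b (w₁ ++ w₂) ↔ NoB b w₁ ∧ NoB b w₂ := by
  simp [NoB, or_imp, forall_and]

lemma NoB_cons {b : α} {e : SSym α} {w : List (SSym α)} :
    NoB b (e :: w) ↔ e.1 ≠ b ∧ NoB b w := by simp [NoB]

lemma NoB_revneg {b : α} {w : List (SSym α)} (h : NoB b w) : NoB b (revneg w) := by
  intro e he
  simp only [revneg, List.mem_reverse, List.mem_map] at he
  obtain ⟨f, hf, rfl⟩ := he
  simpa using h f hf

lemma delSym_append (b : α) (l₁ l₂ : List (SSym α)) :
    delSym b (l₁ ++ l₂) = delSym b l₁ ++ delSym b l₂ := by simp [delSym]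

lemma delSym_glue {b : α} {x x' : SSym α} (hxb : x.1 ≠ b) (hx'b : x'.1 = b)
    {w : List (SSym α)} (hw : NoB b w) : delSym b (glue x x' w) = w := by
  induction w with
  | nil => rfl
  | cons e w ih =>
    rw [NoB_cons] at hw
    rw [glue_cons, delSym_append, ih hw.2]
    have : delSym b (blk x x' e) = [e] := by
      by_cases h1 : e = x
      · subst h1; rw [blk_x]; simp [delSym, hxb, hx'b]
      · by_cases h2 : e = symNeg x
        · subst h2; rw [blk_nx]; simp [delSym, hxb, hx'b]
        · rw [blk_other x' h1 h2]; simp [delSym, hw.1]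
    rw [this]; rfl

lemma glue_split {x x' : SSym α} : ∀ {w p q : List (SSym α)} {c : SSym α},
    glue x x' w = p ++ c :: q →
    ∃ w₁ e w₂ l₁ l₂, w = w₁ ++ e :: w₂ ∧ blk x x' e = l₁ ++ c :: l₂ ∧
      p = glue x x' w₁ ++ l₁ ∧ q = l₂ ++ glue x x' w₂ := by
  intro w
  induction w with
  | nil => intro p q c h; simp at h
  | cons e w ih =>
    intro p q c h
    rw [glue_cons] at h
    rcases List.append_eq_append_iff.1 h with ⟨a', ha1, ha2⟩ | ⟨r, hr1, hr2⟩
    · -- p = blk e ++ a', glue w = a' ++ c :: q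
      obtain ⟨w₁, e₂, w₂, l₁, l₂, hw, hb, hp, hq⟩ := ih ha2
      exact ⟨e :: w₁, e₂, w₂, l₁, l₂, by rw [hw]; rfl, hb,
        by rw [ha1, hp, glue_cons, List.append_assoc], hq⟩
    · -- blk e = p ++ r, c :: q = r ++ glue w
      cases r with
      | nil =>
        simp only [List.nil_append] at hr2
        have hr2' : glue x x' w = [] ++ c :: q := by simpa using hr2.symm
        obtain ⟨w₁, e₂, w₂, l₁, l₂, hw, hb, hp, hq⟩ := ih hr2'
        have hnil : glue x x' w₁ = [] ∧ l₁ = [] :=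
          List.append_eq_nil_iff.1 hp.symm
        refine ⟨e :: w₁, e₂, w₂, l₁, l₂, by rw [hw]; rfl, hb, ?_, hq⟩
        rw [glue_cons, hnil.2, hp, hnil.1, hnil.2]
        simpa using hr1.symm
      | cons r₀ r' =>
        obtain ⟨rfl, hq⟩ : c = r₀ ∧ q = r' ++ glue x x' w := by
          simpa using hr2
        exact ⟨[], e, w, p, r', rfl, by rw [hr1], by simp, hq⟩


end Dec
end RedundantDel
namespace RedundantDel
variable {α : Type*}

lemma pair_eq {β : Type*} {l₁ l₂ : List β} {c u v : β} (h : l₁ ++ c :: l₂ = [u, v]) :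
    (l₁ = [] ∧ c = u ∧ l₂ = [v]) ∨ (l₁ = [u] ∧ c = v ∧ l₂ = []) := by
  match l₁, h with
  | [], h => left; simpa using h
  | [d], h =>
    right
    simp only [List.cons_append, List.nil_append, List.cons.injEq] at h
    exact ⟨by rw [h.1], h.2.1, by simpa using h.2.2⟩
  | d :: d' :: l, h =>
    exfalso
    have := congrArg List.length h
    simp [List.length_append] at this

lemma single_eq {β : Type*} {l₁ l₂ : List β} {c u : β} (h : l₁ ++ c :: l₂ = [u]) :
    l₁ = [] ∧ c = u ∧ l₂ = [] := by
  match l₁, h with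
  | [], h => simpa using h
  | d :: l, h =>
    exfalso
    have := congrArg List.length h
    simp [List.length_append] at this

section Dec
variable [DecidableEq α]
set_option linter.unusedSectionVars false

lemma split_at_x {x x' : SSym α} (hne : x.1 ≠ x'.1) {w p r : List (SSym α)}
    (h : glue x x' w = p ++ x :: r) :
    ∃ w₁ w₂, w = w₁ ++ x :: w₂ ∧ p = glue x x' w₁ ∧ r = x' :: glue x x' w₂ := by
  obtain ⟨w₁, e, w₂, l₁, l₂, hw, hb, hp, hr⟩ := glue_split h
  by_cases h1 : e = x
  · subst h1; rw [blk_x] at hb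
    rcases pair_eq hb.symm with ⟨hl1, _, hl2⟩ | ⟨_, h2, _⟩
    · exact ⟨w₁, w₂, hw, by rw [hp, hl1]; simp, by rw [hr, hl2]; rfl⟩
    · exact absurd h2 (ne_of_fst_ne hne)
  · by_cases h2 : e = symNeg x
    · subst h2; rw [blk_nx] at hb
      rcases pair_eq hb.symm with ⟨_, h3, _⟩ | ⟨_, h3, _⟩
      · exact absurd h3 (ne_of_fst_ne (by simpa using hne))
      · exact (symNeg_ne _ h3.symm).elim
    · rw [blk_other x' h1 h2] at hb
      exact absurd (single_eq hb.symm).2.1 (Ne.symm h1)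

lemma split_at_x' {b : α} {x x' : SSym α} (hne : x.1 ≠ x'.1) (hx'b : x'.1 = b)
    {w p r : List (SSym α)} (hw0 : NoB b w)
    (h : glue x x' w = p ++ x' :: r) :
    ∃ w₁ w₂, w = w₁ ++ x :: w₂ ∧ p = glue x x' w₁ ++ [x] ∧ r = glue x x' w₂ := by
  obtain ⟨w₁, e, w₂, l₁, l₂, hw, hb, hp, hr⟩ := glue_split h
  by_cases h1 : e = x
  · subst h1; rw [blk_x] at hb
    rcases pair_eq hb.symm with ⟨_, h2, _⟩ | ⟨hl1, _, hl2⟩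
    · exact absurd h2.symm (ne_of_fst_ne hne)
    · exact ⟨w₁, w₂, hw, by rw [hp, hl1], by rw [hr, hl2]; rfl⟩
  · by_cases h2 : e = symNeg x
    · subst h2; rw [blk_nx] at hb
      rcases pair_eq hb.symm with ⟨_, h3, _⟩ | ⟨_, h3, _⟩
      · exact absurd h3.symm (symNeg_ne x')
      · exact absurd h3 (ne_of_fst_ne (by simpa using Ne.symm hne))
    · rw [blk_other x' h1 h2] at hb
      have he : e = x' := ((single_eq hb.symm).2.1).symm
      have : e ∈ w := by rw [hw]; simp
      exact absurd (he ▸ hx'b) (hw0 e this)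

lemma split_at_nx {x x' : SSym α} (hne : x.1 ≠ x'.1) {w p r : List (SSym α)}
    (h : glue x x' w = p ++ symNeg x :: r) :
    ∃ w₁ w₂, w = w₁ ++ symNeg x :: w₂ ∧ p = glue x x' w₁ ++ [symNeg x'] ∧
      r = glue x x' w₂ := by
  obtain ⟨w₁, e, w₂, l₁, l₂, hw, hb, hp, hr⟩ := glue_split h
  by_cases h1 : e = x
  · subst h1; rw [blk_x] at hb
    rcases pair_eq hb.symm with ⟨_, h2, _⟩ | ⟨_, h2, _⟩
    · exact (symNeg_ne _ h2).elim
    · exact absurd h2 (ne_of_fst_ne (by simpa using hne))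
  · by_cases h2 : e = symNeg x
    · subst h2; rw [blk_nx] at hb
      rcases pair_eq hb.symm with ⟨_, h3, _⟩ | ⟨hl1, _, hl2⟩
      · exact absurd h3 (ne_of_fst_ne (by simpa using hne))
      · exact ⟨w₁, w₂, hw, by rw [hp, hl1], by rw [hr, hl2]; rfl⟩
    · rw [blk_other x' h1 h2] at hb
      exact absurd (single_eq hb.symm).2.1 (Ne.symm h2)

lemma split_at_nx' {b : α} {x x' : SSym α} (hne : x.1 ≠ x'.1) (hx'b : x'.1 = b)
    {w p r : List (SSym α)} (hw0 : NoB b w)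
    (h : glue x x' w = p ++ symNeg x' :: r) :
    ∃ w₁ w₂, w = w₁ ++ symNeg x :: w₂ ∧ p = glue x x' w₁ ∧
      r = symNeg x :: glue x x' w₂ := by
  obtain ⟨w₁, e, w₂, l₁, l₂, hw, hb, hp, hr⟩ := glue_split h
  by_cases h1 : e = x
  · subst h1; rw [blk_x] at hb
    rcases pair_eq hb.symm with ⟨_, h2, _⟩ | ⟨_, h2, _⟩
    · exact absurd h2 (ne_of_fst_ne (by simpa using Ne.symm hne))
    · exact (symNeg_ne _ h2).elim
  · by_cases h2 : e = symNeg x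
    · subst h2; rw [blk_nx] at hb
      rcases pair_eq hb.symm with ⟨hl1, _, hl2⟩ | ⟨_, h3, _⟩
      · exact ⟨w₁, w₂, hw, by rw [hp, hl1]; simp, by rw [hr, hl2]; rfl⟩
      · exact absurd (symNeg_inj h3) (ne_of_fst_ne (Ne.symm hne))
    · rw [blk_other x' h1 h2] at hb
      have he : e = symNeg x' := ((single_eq hb.symm).2.1).symm
      have hm : e ∈ w := by rw [hw]; simp
      have : e.1 = b := by rw [he]; simpa using hx'b
      exact absurd this (hw0 e hm)

lemma split_at_other {x x' c : SSym α} (hcx : c ≠ x) (hcnx : c ≠ symNeg x)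
    (hcx' : c ≠ x') (hcnx' : c ≠ symNeg x') {w p r : List (SSym α)}
    (h : glue x x' w = p ++ c :: r) :
    ∃ w₁ w₂, w = w₁ ++ c :: w₂ ∧ p = glue x x' w₁ ∧ r = glue x x' w₂ := by
  obtain ⟨w₁, e, w₂, l₁, l₂, hw, hb, hp, hr⟩ := glue_split h
  by_cases h1 : e = x
  · subst h1; rw [blk_x] at hb
    rcases pair_eq hb.symm with ⟨_, h2, _⟩ | ⟨_, h2, _⟩
    · exact absurd h2 hcx
    · exact absurd h2 hcx'
  · by_cases h2 : e = symNeg x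
    · subst h2; rw [blk_nx] at hb
      rcases pair_eq hb.symm with ⟨_, h3, _⟩ | ⟨_, h3, _⟩
      · exact absurd h3 hcnx'
      · exact absurd h3 hcnx
    · rw [blk_other x' h1 h2] at hb
      obtain ⟨hl1, hce, hl2⟩ := single_eq hb.symm
      subst hce
      exact ⟨w₁, w₂, hw, by rw [hp, hl1]; simp, by rw [hr, hl2]; rfl⟩

end Dec
end RedundantDel
namespace RedundantDel
variable {α : Type*}

lemma multiset_pair_eq {β : Type*} {a b c d : β} (h : ({a, b} : Multiset β) = {c, d}) :
    (a = c ∧ b = d) ∨ (a = d ∧ b = c) := by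
  rw [Multiset.insert_eq_cons, Multiset.insert_eq_cons] at h
  rcases Multiset.cons_eq_cons.1 h with ⟨h1, h2⟩ | ⟨h1, cs, h2, h3⟩
  · exact Or.inl ⟨h1, Multiset.singleton_inj.1 h2⟩
  · rw [Multiset.singleton_eq_cons_iff] at h2 h3
    exact Or.inr ⟨(h3.1).symm, h2.1⟩

lemma adjOf_eq_symNeg (u v : SSym α) : adjOf u v = ({symNeg u, v} : Multiset (SSym α)) := rfl

lemma adjOf_eq_iff {x x' u v : SSym α} (hne : x.1 ≠ x'.1) (h : adjOf u v = adjOf x x') :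
    (u = x ∧ v = x') ∨ (u = symNeg x' ∧ v = symNeg x) := by
  rw [adjOf_eq_symNeg, adjOf_eq_symNeg] at h
  rcases multiset_pair_eq h with ⟨h1, h2⟩ | ⟨h1, h2⟩
  · exact Or.inl ⟨symNeg_inj h1, h2⟩
  · right
    constructor
    · have := congrArg symNeg h1; simpa using this
    · rw [h2]

lemma adjMS_nil : adjMS ([] : List (SSym α)) = 0 := rfl

lemma adjMS_single (u : SSym α) : adjMS [u] = 0 := rfl

lemma adjMS_cons2 (u v : SSym α) (t : List (SSym α)) :
    adjMS (u :: v :: t) = adjOf u v ::ₘ adjMS (v :: t) := rfl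

lemma dpCount_cons [DecidableEq α] (b : α) (u : SSym α) (l : List (SSym α)) :
    dpCount b (u :: l) = dpCount b l + (if u.1 = b then 1 else 0) := by
  simp [dpCount, List.count_cons]

section Count
variable [DecidableEq α]
set_option linter.unusedSectionVars false

variable {b : α} {x x' : SSym α}

lemma count_adjMS_cons_x' (hne : x.1 ≠ x'.1) (t : List (SSym α)) :
    (adjMS (x' :: t)).count (adjOf x x') = (adjMS t).count (adjOf x x') := by
  cases t with
  | nil => rfl
  | cons t₀ t' =>
    rw [adjMS_cons2, Multiset.count_cons, if_neg, add_zero]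
    intro hEq
    rcases adjOf_eq_iff hne hEq.symm with ⟨h1, _⟩ | ⟨h1, _⟩
    · exact ne_of_fst_ne (Ne.symm hne) h1
    · exact symNeg_ne x' h1.symm

lemma count_adjMS_cons_nx (hne : x.1 ≠ x'.1) (t : List (SSym α)) :
    (adjMS (symNeg x :: t)).count (adjOf x x') = (adjMS t).count (adjOf x x') := by
  cases t with
  | nil => rfl
  | cons t₀ t' =>
    rw [adjMS_cons2, Multiset.count_cons, if_neg, add_zero]
    intro hEq
    rcases adjOf_eq_iff hne hEq.symm with ⟨h1, _⟩ | ⟨h1, _⟩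
    · exact symNeg_ne x h1
    · exact ne_of_fst_ne (by simpa using hne) h1

lemma countA_le_b (hne : x.1 ≠ x'.1) (hx'b : x'.1 = b) :
    ∀ n (σ : List (SSym α)), σ.length ≤ n →
      (adjMS σ).count (adjOf x x') ≤ dpCount b σ := by
  intro n
  induction n with
  | zero =>
    intro σ hσ
    rw [List.length_eq_zero_iff.1 (Nat.le_zero.1 hσ)]
    simp [adjMS_nil, dpCount]
  | succ n ih =>
    intro σ hσ
    match σ with
    | [] => simp [adjMS_nil, dpCount]
    | [u] => simp [adjMS_single, dpCount]
    | u :: v :: t =>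
      simp only [List.length_cons] at hσ
      rw [adjMS_cons2, Multiset.count_cons, dpCount_cons]
      by_cases hEq : adjOf x x' = adjOf u v
      · rcases adjOf_eq_iff hne hEq.symm with ⟨h1, h2⟩ | ⟨h1, h2⟩
        · -- (x, x')
          rw [h1, h2, if_pos rfl, count_adjMS_cons_x' hne t,
            dpCount_cons, if_pos hx'b,
            if_neg (show ¬ (x.1 = b) from fun hh => hne (hh.trans hx'b.symm))]
          have h3 := ih t (by omega)
          omega
        · -- (symNeg x', symNeg x)
          rw [h1, h2] at hEq
          rw [h1, h2, if_pos hEq, if_pos (show (symNeg x').1 = b by simpa using hx'b)]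
          have h3 := ih (symNeg x :: t) (by simpa using Nat.le_of_succ_le_succ hσ)
          omega
      · rw [if_neg hEq, add_zero]
        have h3 := ih (v :: t) (by simpa using Nat.le_of_succ_le_succ hσ)
        split <;> omega

end Count
end RedundantDel
namespace RedundantDel
variable {α : Type*}

/-- The occurrence `c` of the repeat `b` is covered by the redundant pattern. -/
def CovB (x x' : SSym α) (u₁ : List (SSym α)) (c : SSym α) (v₁ : List (SSym α)) : Prop :=
  (c = x' ∧ ∃ u₀, u₁ = u₀ ++ [x]) ∨ (c = symNeg x' ∧ ∃ v₀, v₁ = symNeg x :: v₀)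

/-- The occurrence `c` of the repeat `a` is covered by the redundant pattern. -/
def CovA (x x' : SSym α) (u₁ : List (SSym α)) (c : SSym α) (v₁ : List (SSym α)) : Prop :=
  (c = x ∧ ∃ v₀, v₁ = x' :: v₀) ∨ (c = symNeg x ∧ ∃ u₀, u₁ = u₀ ++ [symNeg x'])

section Count
variable [DecidableEq α]
set_option linter.unusedSectionVars false
variable {b : α} {x x' : SSym α}

lemma countA_lt_b (hne : x.1 ≠ x'.1) (hx'b : x'.1 = b) :
    ∀ n (u₁ v₁ : List (SSym α)) (c : SSym α), (u₁ ++ c :: v₁).length ≤ n →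
      c.1 = b → ¬ CovB x x' u₁ c v₁ →
      (adjMS (u₁ ++ c :: v₁)).count (adjOf x x') + 1 ≤ dpCount b (u₁ ++ c :: v₁) := by
  have hxb : ¬ (x.1 = b) := fun hh => hne (hh.trans hx'b.symm)
  intro n
  induction n with
  | zero => intro u₁ v₁ c hl; simp at hl
  | succ n ih =>
    intro u₁ v₁ c hl hcb hCov
    match u₁ with
    | [] =>
      match v₁ with
      | [] =>
        simp only [List.nil_append]
        rw [adjMS_single, dpCount_cons, if_pos hcb]
        simp [dpCount]
      | v :: t =>
        simp only [List.nil_append]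
        rw [adjMS_cons2, Multiset.count_cons, dpCount_cons, if_pos hcb]
        by_cases hEq : adjOf x x' = adjOf c v
        · exfalso
          rcases adjOf_eq_iff hne hEq.symm with ⟨h1, _⟩ | ⟨h1, h2⟩
          · exact hxb (h1 ▸ hcb)
          · exact hCov (Or.inr ⟨h1, t, by rw [h2]⟩)
        · rw [if_neg hEq, add_zero]
          have h3 := countA_le_b hne hx'b (n) (v :: t)
            (by simp only [List.nil_append, List.length_cons] at hl ⊢; omega)
          omega
    | [u] =>
      simp only [List.cons_append, List.nil_append]
      rw [adjMS_cons2, Multiset.count_cons, dpCount_cons]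
      by_cases hEq : adjOf x x' = adjOf u c
      · exfalso
        rcases adjOf_eq_iff hne hEq.symm with ⟨h1, h2⟩ | ⟨_, h2⟩
        · exact hCov (Or.inl ⟨h2, [], by rw [h1]; rfl⟩)
        · exact absurd (h2 ▸ hcb) (by simpa using hxb)
      · rw [if_neg hEq, add_zero]
        have hCov' : ¬ CovB x x' [] c v₁ := by
          rintro (⟨h1, u₀, h2⟩ | ⟨h1, h2⟩)
          · exact absurd h2 (by simp)
          · exact hCov (Or.inr ⟨h1, h2⟩)
        have h3 := ih [] v₁ c
          (by simp only [List.cons_append, List.nil_append, List.length_cons] at hl ⊢; omega)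
          hcb hCov'
        simp only [List.nil_append] at h3
        split <;> omega
    | u :: w :: u₁'' =>
      simp only [List.cons_append]
      rw [adjMS_cons2, Multiset.count_cons, dpCount_cons]
      have hl' : (w :: (u₁'' ++ c :: v₁)).length ≤ n := by
        simp only [List.cons_append, List.length_cons, List.length_append] at hl ⊢
        omega
      by_cases hEq : adjOf x x' = adjOf u w
      · rcases adjOf_eq_iff hne hEq.symm with ⟨h1, h2⟩ | ⟨h1, h2⟩
        · -- u = x, w = x'
          rw [if_pos hEq, h1, if_neg hxb]
          rw [h2, count_adjMS_cons_x' hne]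
          have hCov'' : ¬ CovB x x' u₁'' c v₁ := by
            rintro (⟨hh1, u₀, hh2⟩ | ⟨hh1, hh2⟩)
            · exact hCov (Or.inl ⟨hh1, u :: w :: u₀, by rw [hh2]; rfl⟩)
            · exact hCov (Or.inr ⟨hh1, hh2⟩)
          have h3 := ih u₁'' v₁ c (by
            simp only [List.length_cons] at hl' ⊢; omega) hcb hCov''
          have h4 : dpCount b (x' :: (u₁'' ++ c :: v₁)) =
              dpCount b (u₁'' ++ c :: v₁) + 1 := by
            rw [dpCount_cons, if_pos hx'b]
          omega
        · -- u = symNeg x', w = symNeg x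
          rw [if_pos hEq, h1, if_pos (show (symNeg x').1 = b by simpa using hx'b)]
          have hCov' : ¬ CovB x x' (w :: u₁'') c v₁ := by
            rintro (⟨hh1, u₀, hh2⟩ | ⟨hh1, hh2⟩)
            · exact hCov (Or.inl ⟨hh1, u :: u₀, by rw [hh2]; rfl⟩)
            · exact hCov (Or.inr ⟨hh1, hh2⟩)
          have h3 := ih (w :: u₁'') v₁ c (by simpa using hl') hcb hCov'
          simp only [List.cons_append] at h3
          omega
      · rw [if_neg hEq, add_zero]
        have hCov' : ¬ CovB x x' (w :: u₁'') c v₁ := by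
          rintro (⟨hh1, u₀, hh2⟩ | ⟨hh1, hh2⟩)
          · exact hCov (Or.inl ⟨hh1, u :: u₀, by rw [hh2]; rfl⟩)
          · exact hCov (Or.inr ⟨hh1, hh2⟩)
        have h3 := ih (w :: u₁'') v₁ c (by simpa using hl') hcb hCov'
        simp only [List.cons_append] at h3
        split <;> omega

end Count
end RedundantDel
namespace RedundantDel
variable {α : Type*}
section Count
variable [DecidableEq α]
set_option linter.unusedSectionVars false
variable {x x' : SSym α}

lemma countA_le_a (hne : x.1 ≠ x'.1) :
    ∀ n (σ : List (SSym α)), σ.length ≤ n →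
      (adjMS σ).count (adjOf x x') ≤ dpCount x.1 σ := by
  intro n
  induction n with
  | zero =>
    intro σ hσ
    rw [List.length_eq_zero_iff.1 (Nat.le_zero.1 hσ)]
    simp [adjMS_nil, dpCount]
  | succ n ih =>
    intro σ hσ
    match σ with
    | [] => simp [adjMS_nil, dpCount]
    | [u] => simp [adjMS_single, dpCount]
    | u :: v :: t =>
      simp only [List.length_cons] at hσ
      rw [adjMS_cons2, Multiset.count_cons, dpCount_cons]
      by_cases hEq : adjOf x x' = adjOf u v
      · rcases adjOf_eq_iff hne hEq.symm with ⟨h1, h2⟩ | ⟨h1, h2⟩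
        · -- (x, x')
          rw [h1, h2] at hEq
          rw [h1, h2, if_pos hEq, if_pos rfl]
          have h3 := ih (x' :: t) (by simp only [List.length_cons] at *; omega)
          omega
        · -- (symNeg x', symNeg x)
          rw [h1, h2] at hEq
          rw [h1, h2, if_pos hEq, count_adjMS_cons_nx hne,
            if_neg (show ¬ (symNeg x').1 = x.1 by simpa using Ne.symm hne)]
          have h3 := ih t (by omega)
          have h4 : dpCount x.1 (symNeg x :: t) = dpCount x.1 t + 1 := by
            rw [dpCount_cons, if_pos (by simp)]
          omega
      · rw [if_neg hEq, add_zero]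
        have h3 := ih (v :: t) (by simp only [List.length_cons] at *; omega)
        split <;> omega

lemma countA_lt_a (hne : x.1 ≠ x'.1) :
    ∀ n (u₁ v₁ : List (SSym α)) (c : SSym α), (u₁ ++ c :: v₁).length ≤ n →
      c.1 = x.1 → ¬ CovA x x' u₁ c v₁ →
      (adjMS (u₁ ++ c :: v₁)).count (adjOf x x') + 1 ≤ dpCount x.1 (u₁ ++ c :: v₁) := by
  intro n
  induction n with
  | zero => intro u₁ v₁ c hl; simp at hl
  | succ n ih =>
    intro u₁ v₁ c hl hca hCov
    match u₁ with
    | [] =>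
      match v₁ with
      | [] =>
        simp only [List.nil_append]
        rw [adjMS_single, dpCount_cons, if_pos hca]
        simp [dpCount]
      | v :: t =>
        simp only [List.nil_append]
        rw [adjMS_cons2, Multiset.count_cons, dpCount_cons, if_pos hca]
        by_cases hEq : adjOf x x' = adjOf c v
        · exfalso
          rcases adjOf_eq_iff hne hEq.symm with ⟨h1, h2⟩ | ⟨h1, _⟩
          · exact hCov (Or.inl ⟨h1, t, by rw [h2]⟩)
          · exact (Ne.symm hne) (by rw [h1] at hca; simpa using hca)
        · rw [if_neg hEq, add_zero]
          have h3 := countA_le_a hne n (v :: t)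
            (by simp only [List.nil_append, List.length_cons] at hl ⊢; omega)
          omega
    | [u] =>
      simp only [List.cons_append, List.nil_append]
      rw [adjMS_cons2, Multiset.count_cons, dpCount_cons]
      by_cases hEq : adjOf x x' = adjOf u c
      · exfalso
        rcases adjOf_eq_iff hne hEq.symm with ⟨_, h2⟩ | ⟨h1, h2⟩
        · exact (Ne.symm hne) (by rw [h2] at hca; exact hca)
        · exact hCov (Or.inr ⟨h2, [], by rw [h1]; rfl⟩)
      · rw [if_neg hEq, add_zero]
        have hCov' : ¬ CovA x x' [] c v₁ := by
          rintro (⟨h1, h2⟩ | ⟨h1, u₀, h2⟩)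
          · exact hCov (Or.inl ⟨h1, h2⟩)
          · exact absurd h2 (by simp)
        have h3 := ih [] v₁ c
          (by simp only [List.cons_append, List.nil_append, List.length_cons] at hl ⊢; omega)
          hca hCov'
        simp only [List.nil_append] at h3
        split <;> omega
    | u :: w :: u₁'' =>
      simp only [List.cons_append]
      rw [adjMS_cons2, Multiset.count_cons, dpCount_cons]
      have hl' : (w :: (u₁'' ++ c :: v₁)).length ≤ n := by
        simp only [List.cons_append, List.length_cons, List.length_append] at hl ⊢
        omega
      by_cases hEq : adjOf x x' = adjOf u w
      · rcases adjOf_eq_iff hne hEq.symm with ⟨h1, h2⟩ | ⟨h1, h2⟩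
        · -- u = x, w = x'
          rw [if_pos hEq, h1, if_pos rfl, h2, count_adjMS_cons_x' hne]
          have hCov'' : ¬ CovA x x' u₁'' c v₁ := by
            rintro (⟨hh1, hh2⟩ | ⟨hh1, u₀, hh2⟩)
            · exact hCov (Or.inl ⟨hh1, hh2⟩)
            · exact hCov (Or.inr ⟨hh1, u :: w :: u₀, by rw [hh2]; rfl⟩)
          have h3 := ih u₁'' v₁ c (by
            simp only [List.length_cons] at hl' ⊢; omega) hca hCov''
          have h4 : dpCount x.1 (x' :: (u₁'' ++ c :: v₁)) =
              dpCount x.1 (u₁'' ++ c :: v₁) := by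
            rw [dpCount_cons, if_neg (Ne.symm hne), add_zero]
          omega
        · -- u = symNeg x', w = symNeg x
          rw [if_pos hEq, h1,
            if_neg (show ¬ (symNeg x').1 = x.1 by simpa using Ne.symm hne), add_zero,
            h2, count_adjMS_cons_nx hne]
          have hCov'' : ¬ CovA x x' u₁'' c v₁ := by
            rintro (⟨hh1, hh2⟩ | ⟨hh1, u₀, hh2⟩)
            · exact hCov (Or.inl ⟨hh1, hh2⟩)
            · exact hCov (Or.inr ⟨hh1, u :: w :: u₀, by rw [hh2]; rfl⟩)
          have h3 := ih u₁'' v₁ c (by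
            simp only [List.length_cons] at hl' ⊢; omega) hca hCov''
          have h4 : dpCount x.1 (symNeg x :: (u₁'' ++ c :: v₁)) =
              dpCount x.1 (u₁'' ++ c :: v₁) + 1 := by
            rw [dpCount_cons, if_pos (by simp)]
          omega
      · rw [if_neg hEq, add_zero]
        have hCov' : ¬ CovA x x' (w :: u₁'') c v₁ := by
          rintro (⟨hh1, hh2⟩ | ⟨hh1, u₀, hh2⟩)
          · exact hCov (Or.inl ⟨hh1, hh2⟩)
          · exact hCov (Or.inr ⟨hh1, u :: u₀, by rw [hh2]; rfl⟩)
        have h3 := ih (w :: u₁'') v₁ c (by simpa using hl') hca hCov'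
        simp only [List.cons_append] at h3
        split <;> omega

end Count
end RedundantDel
namespace RedundantDel
variable {α : Type*}

lemma append_concat_cases {β : Type*} {B u u₀ : List β} {z : β} (h : B ++ u = u₀ ++ [z]) :
    (u = [] ∧ B = u₀ ++ [z]) ∨ ∃ u₁, u = u₁ ++ [z] := by
  rcases List.eq_nil_or_concat u with rfl | ⟨L, zc, rfl⟩
  · left; simpa using h
  · right
    have h2 : (B ++ L) ++ [zc] = u₀ ++ [z] := by
      simpa [List.append_assoc, List.concat_eq_append] using h
    have h3 : zc = z := by
      have := congrArg List.getLast? h2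
      simpa using this
    exact ⟨L, by rw [h3, List.concat_eq_append]⟩

lemma last_two {β : Type*} {u₀ : List β} {d e z : β} (h : [d, e] = u₀ ++ [z]) : e = z := by
  have := congrArg List.getLast? h
  simpa using this

lemma last_one {β : Type*} {u₀ : List β} {d z : β} (h : [d] = u₀ ++ [z]) : d = z := by
  have := congrArg List.getLast? h
  simpa using this

section Dec
variable [DecidableEq α]
set_option linter.unusedSectionVars false
variable {b : α} {x x' : SSym α}

lemma laws_to_glued (hne : x.1 ≠ x'.1) (hx'b : x'.1 = b) :
    ∀ n (σ : List (SSym α)), σ.length ≤ n →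
    (∀ u c v, σ = u ++ c :: v → c.1 = x.1 → CovA x x' u c v) →
    (∀ u c v, σ = u ++ c :: v → c.1 = b → CovB x x' u c v) →
    ∃ w, NoB b w ∧ σ = glue x x' w := by
  have hxb : x.1 ≠ b := fun hh => hne (hh.trans hx'b.symm)
  intro n
  induction n with
  | zero =>
    intro σ hσ _ _
    rw [List.length_eq_zero_iff.1 (Nat.le_zero.1 hσ)]
    exact ⟨[], by simp [NoB], rfl⟩
  | succ n ih =>
    intro σ hσ Pa Pb
    match σ with
    | [] => exact ⟨[], by simp [NoB], rfl⟩
    | c₀ :: rest =>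
      by_cases hca : c₀.1 = x.1
      · rcases Pa [] c₀ rest rfl hca with ⟨h1, v₀, h2⟩ | ⟨_, u₀, h2⟩
        · -- c₀ = x, rest = x' :: v₀
          have hlen : v₀.length ≤ n := by
            rw [h2] at hσ; simp only [List.length_cons] at hσ; omega
          have Pa' : ∀ u c v, v₀ = u ++ c :: v → c.1 = x.1 → CovA x x' u c v := by
            intro u c v h hc
            have hσ2 : c₀ :: rest = (c₀ :: x' :: u) ++ c :: v := by rw [h2, h]; rfl
            rcases Pa _ _ _ hσ2 hc with ⟨hh1, hv⟩ | ⟨hh1, u₀, hu⟩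
            · exact Or.inl ⟨hh1, hv⟩
            · rcases append_concat_cases (B := [c₀, x']) (u := u)
                (by simpa using hu) with ⟨_, hB⟩ | ⟨u₁, hu₁⟩
              · exact absurd (last_two hB) (Ne.symm (symNeg_ne x'))
              · exact Or.inr ⟨hh1, u₁, hu₁⟩
          have Pb' : ∀ u c v, v₀ = u ++ c :: v → c.1 = b → CovB x x' u c v := by
            intro u c v h hc
            have hσ2 : c₀ :: rest = (c₀ :: x' :: u) ++ c :: v := by rw [h2, h]; rfl
            rcases Pb _ _ _ hσ2 hc with ⟨hh1, u₀, hu⟩ | ⟨hh1, hv⟩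
            · rcases append_concat_cases (B := [c₀, x']) (u := u)
                (by simpa using hu) with ⟨_, hB⟩ | ⟨u₁, hu₁⟩
              · exact absurd (last_two hB) (ne_of_fst_ne (by simpa using Ne.symm hne))
              · exact Or.inl ⟨hh1, u₁, hu₁⟩
            · exact Or.inr ⟨hh1, hv⟩
          obtain ⟨w₁, hw₁, hg⟩ := ih v₀ hlen Pa' Pb'
          refine ⟨x :: w₁, ?_, ?_⟩
          · rw [NoB_cons]; exact ⟨hxb, hw₁⟩
          · rw [h2, h1, glue_cons, blk_x, hg]; rfl
        · exact absurd h2 (by simp)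
      · by_cases hcb : c₀.1 = b
        · rcases Pb [] c₀ rest rfl hcb with ⟨_, u₀, h2⟩ | ⟨h1, v₀, h2⟩
          · exact absurd h2 (by simp)
          · -- c₀ = symNeg x', rest = symNeg x :: v₀
            have hlen : v₀.length ≤ n := by
              rw [h2] at hσ; simp only [List.length_cons] at hσ; omega
            have Pa' : ∀ u c v, v₀ = u ++ c :: v → c.1 = x.1 → CovA x x' u c v := by
              intro u c v h hc
              have hσ2 : c₀ :: rest = (c₀ :: symNeg x :: u) ++ c :: v := by rw [h2, h]; rfl
              rcases Pa _ _ _ hσ2 hc with ⟨hh1, hv⟩ | ⟨hh1, u₀, hu⟩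
              · exact Or.inl ⟨hh1, hv⟩
              · rcases append_concat_cases (B := [c₀, symNeg x]) (u := u)
                  (by simpa using hu) with ⟨_, hB⟩ | ⟨u₁, hu₁⟩
                · exact absurd (last_two hB) (ne_of_fst_ne (by simpa using hne))
                · exact Or.inr ⟨hh1, u₁, hu₁⟩
            have Pb' : ∀ u c v, v₀ = u ++ c :: v → c.1 = b → CovB x x' u c v := by
              intro u c v h hc
              have hσ2 : c₀ :: rest = (c₀ :: symNeg x :: u) ++ c :: v := by rw [h2, h]; rfl
              rcases Pb _ _ _ hσ2 hc with ⟨hh1, u₀, hu⟩ | ⟨hh1, hv⟩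
              · rcases append_concat_cases (B := [c₀, symNeg x]) (u := u)
                  (by simpa using hu) with ⟨_, hB⟩ | ⟨u₁, hu₁⟩
                · exact absurd (last_two hB) (symNeg_ne x)
                · exact Or.inl ⟨hh1, u₁, hu₁⟩
              · exact Or.inr ⟨hh1, hv⟩
            obtain ⟨w₁, hw₁, hg⟩ := ih v₀ hlen Pa' Pb'
            refine ⟨symNeg x :: w₁, ?_, ?_⟩
            · rw [NoB_cons]; exact ⟨by simpa using hxb, hw₁⟩
            · rw [h2, h1, glue_cons, blk_nx, hg]; rfl
        · -- single block
          have hlen : rest.length ≤ n := by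
            simp only [List.length_cons] at hσ; omega
          have Pa' : ∀ u c v, rest = u ++ c :: v → c.1 = x.1 → CovA x x' u c v := by
            intro u c v h hc
            have hσ2 : c₀ :: rest = (c₀ :: u) ++ c :: v := by rw [h]; rfl
            rcases Pa _ _ _ hσ2 hc with ⟨hh1, hv⟩ | ⟨hh1, u₀, hu⟩
            · exact Or.inl ⟨hh1, hv⟩
            · rcases append_concat_cases (B := [c₀]) (u := u)
                (by simpa using hu) with ⟨_, hB⟩ | ⟨u₁, hu₁⟩
              · exact absurd (by rw [last_one hB]; simpa using hx'b) hcb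
              · exact Or.inr ⟨hh1, u₁, hu₁⟩
          have Pb' : ∀ u c v, rest = u ++ c :: v → c.1 = b → CovB x x' u c v := by
            intro u c v h hc
            have hσ2 : c₀ :: rest = (c₀ :: u) ++ c :: v := by rw [h]; rfl
            rcases Pb _ _ _ hσ2 hc with ⟨hh1, u₀, hu⟩ | ⟨hh1, hv⟩
            · rcases append_concat_cases (B := [c₀]) (u := u)
                (by simpa using hu) with ⟨_, hB⟩ | ⟨u₁, hu₁⟩
              · exact absurd (by rw [last_one hB]) hca
              · exact Or.inl ⟨hh1, u₁, hu₁⟩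
            · exact Or.inr ⟨hh1, hv⟩
          obtain ⟨w₁, hw₁, hg⟩ := ih rest hlen Pa' Pb'
          refine ⟨c₀ :: w₁, ?_, ?_⟩
          · rw [NoB_cons]; exact ⟨hcb, hw₁⟩
          · rw [glue_cons, blk_other x' (fun hh => hca (by rw [hh]))
              (fun hh => hca (by rw [hh]; simp)), hg]; rfl

end Dec
end RedundantDel
namespace RedundantDel
variable {α : Type*}
section Dec
variable [DecidableEq α]
set_option linter.unusedSectionVars false
variable {b : α} {x x' : SSym α}

lemma step_glued (hne : x.1 ≠ x'.1) (hx'b : x'.1 = b) {σ σ₂ : List (SSym α)}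
    {w : List (SSym α)} (hw : NoB b w) (hσ : σ = glue x x' w) (h : SymRev σ σ₂) :
    ∃ w₂, NoB b w₂ ∧ σ₂ = glue x x' w₂ ∧ SymRev w w₂ := by
  obtain ⟨p, m, q, y, hy1, hy2⟩ := h
  rw [hσ] at hy1
  by_cases h1 : y = x
  · rw [h1] at hy1 hy2
    have hy1' : glue x x' w = p ++ x :: (m ++ symNeg x :: q) := by simpa [List.cons_append, List.append_assoc] using hy1
    obtain ⟨w₁, w₂, hwd, hp, hr⟩ := split_at_x hne hy1'
    cases m with
    | nil =>
      exfalso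
      have : symNeg x = x' := by simpa using congrArg List.head? hr
      exact ne_of_fst_ne (by simpa using hne) this
    | cons m₀ mt =>
      simp only [List.cons_append, List.cons.injEq] at hr
      obtain ⟨hm₀, hrest⟩ := hr
      obtain ⟨w₃, w₄, hwd2, hm, hq⟩ := split_at_nx hne hrest.symm
      rw [hwd2] at hwd
      rw [hwd] at hw
      rw [NoB_append, NoB_cons, NoB_append, NoB_cons] at hw
      obtain ⟨hw1, hwx, hw3, hwnx, hw4⟩ := hw
      refine ⟨w₁ ++ x :: (revneg w₃ ++ symNeg x :: w₄), ?_, ?_, ?_⟩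
      · rw [NoB_append, NoB_cons, NoB_append, NoB_cons]
        exact ⟨hw1, hwx, NoB_revneg hw3, hwnx, hw4⟩
      · rw [hy2, hp, hq, hm₀, hm]
        simp [glue_append, glue_cons, blk_x, blk_nx, revneg_append, revneg_cons,
          revneg_singleton, revneg_glue, symNeg_symNeg, List.append_assoc]
      · exact ⟨w₁, w₃, w₄, x, by simpa [List.cons_append, List.append_assoc] using hwd,
          by simp [List.cons_append, List.append_assoc]⟩
  · by_cases h2 : y = symNeg x
    · rw [h2] at hy1 hy2
      rw [symNeg_symNeg] at hy1 hy2
      have hy1' : glue x x' w = p ++ symNeg x :: (m ++ x :: q) := by simpa [List.cons_append, List.append_assoc] using hy1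
      obtain ⟨w₁, w₂, hwd, hp, hr⟩ := split_at_nx hne hy1'
      obtain ⟨w₃, w₄, hwd2, hm, hq⟩ := split_at_x hne hr.symm
      rw [hwd2] at hwd
      rw [hwd] at hw
      rw [NoB_append, NoB_cons, NoB_append, NoB_cons] at hw
      obtain ⟨hw1, hwx, hw3, hwnx, hw4⟩ := hw
      refine ⟨w₁ ++ symNeg x :: (revneg w₃ ++ x :: w₄), ?_, ?_, ?_⟩
      · rw [NoB_append, NoB_cons, NoB_append, NoB_cons]
        exact ⟨hw1, hwx, NoB_revneg hw3, hwnx, hw4⟩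
      · rw [hy2, hp, hq, hm]
        simp [glue_append, glue_cons, blk_x, blk_nx, revneg_glue, List.append_assoc]
      · refine ⟨w₁, w₃, w₄, symNeg x, ?_, ?_⟩
        · rw [hwd]; simp [symNeg_symNeg, List.cons_append, List.append_assoc]
        · simp [symNeg_symNeg, List.cons_append, List.append_assoc]
    · by_cases h3 : y = x'
      · rw [h3] at hy1 hy2
        have hy1' : glue x x' w = p ++ x' :: (m ++ symNeg x' :: q) := by simpa [List.cons_append, List.append_assoc] using hy1
        obtain ⟨w₁, w₂, hwd, hp, hr⟩ := split_at_x' hne hx'b hw hy1'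
        have hw₂ : NoB b w₂ := by
          rw [hwd, NoB_append, NoB_cons] at hw; exact hw.2.2
        obtain ⟨w₃, w₄, hwd2, hm, hq⟩ := split_at_nx' hne hx'b hw₂ hr.symm
        rw [hwd2] at hwd
        rw [hwd] at hw
        rw [NoB_append, NoB_cons, NoB_append, NoB_cons] at hw
        obtain ⟨hw1, hwx, hw3, hwnx, hw4⟩ := hw
        refine ⟨w₁ ++ x :: (revneg w₃ ++ symNeg x :: w₄), ?_, ?_, ?_⟩
        · rw [NoB_append, NoB_cons, NoB_append, NoB_cons]
          exact ⟨hw1, hwx, NoB_revneg hw3, hwnx, hw4⟩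
        · rw [hy2, hp, hq, hm]
          simp [glue_append, glue_cons, blk_x, blk_nx, revneg_glue, List.append_assoc]
        · exact ⟨w₁, w₃, w₄, x, by simpa [List.cons_append, List.append_assoc] using hwd,
          by simp [List.cons_append, List.append_assoc]⟩
      · by_cases h4 : y = symNeg x'
        · rw [h4] at hy1 hy2
          rw [symNeg_symNeg] at hy1 hy2
          have hy1' : glue x x' w = p ++ symNeg x' :: (m ++ x' :: q) := by simpa [List.cons_append, List.append_assoc] using hy1
          obtain ⟨w₁, w₂, hwd, hp, hr⟩ := split_at_nx' hne hx'b hw hy1'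
          cases m with
          | nil =>
            exfalso
            have : x' = symNeg x := by simpa using congrArg List.head? hr
            exact ne_of_fst_ne (by simpa using Ne.symm hne) this
          | cons m₀ mt =>
            simp only [List.cons_append, List.cons.injEq] at hr
            obtain ⟨hm₀, hrest⟩ := hr
            have hw₂ : NoB b w₂ := by
              rw [hwd, NoB_append, NoB_cons] at hw; exact hw.2.2
            obtain ⟨w₃, w₄, hwd2, hm, hq⟩ := split_at_x' hne hx'b hw₂ hrest.symm
            rw [hwd2] at hwd
            rw [hwd] at hw
            rw [NoB_append, NoB_cons, NoB_append, NoB_cons] at hw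
            obtain ⟨hw1, hwx, hw3, hwnx, hw4⟩ := hw
            refine ⟨w₁ ++ symNeg x :: (revneg w₃ ++ x :: w₄), ?_, ?_, ?_⟩
            · rw [NoB_append, NoB_cons, NoB_append, NoB_cons]
              exact ⟨hw1, hwx, NoB_revneg hw3, hwnx, hw4⟩
            · rw [hy2, hp, hq, hm₀, hm]
              simp [glue_append, glue_cons, blk_x, blk_nx, revneg_append, revneg_cons,
                revneg_singleton, revneg_glue, symNeg_symNeg, List.append_assoc]
            · refine ⟨w₁, w₃, w₄, symNeg x, ?_, ?_⟩
              · rw [hwd]; simp [symNeg_symNeg, List.cons_append, List.append_assoc]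
              · simp [symNeg_symNeg, List.cons_append, List.append_assoc]
        · -- y is none of the four special occurrences
          have h5 : symNeg y ≠ x := fun hh => h2 (by rw [← hh, symNeg_symNeg])
          have h6 : symNeg y ≠ symNeg x := fun hh => h1 (symNeg_inj hh)
          have h7 : symNeg y ≠ x' := fun hh => h4 (by rw [← hh, symNeg_symNeg])
          have h8 : symNeg y ≠ symNeg x' := fun hh => h3 (symNeg_inj hh)
          have hy1' : glue x x' w = p ++ y :: (m ++ symNeg y :: q) := by simpa [List.cons_append, List.append_assoc] using hy1
          obtain ⟨w₁, w₂, hwd, hp, hr⟩ := split_at_other h1 h2 h3 h4 hy1'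
          obtain ⟨w₃, w₄, hwd2, hm, hq⟩ := split_at_other h5 h6 h7 h8 hr.symm
          rw [hwd2] at hwd
          rw [hwd] at hw
          rw [NoB_append, NoB_cons, NoB_append, NoB_cons] at hw
          obtain ⟨hw1, hwy, hw3, hwny, hw4⟩ := hw
          refine ⟨w₁ ++ y :: (revneg w₃ ++ symNeg y :: w₄), ?_, ?_, ?_⟩
          · rw [NoB_append, NoB_cons, NoB_append, NoB_cons]
            exact ⟨hw1, hwy, NoB_revneg hw3, hwny, hw4⟩
          · rw [hy2, hp, hq, hm]
            simp [glue_append, glue_cons, blk_other x' h1 h2, blk_other x' h5 h6,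
              revneg_glue, List.append_assoc]
          · exact ⟨w₁, w₃, w₄, y, by simpa [List.cons_append, List.append_assoc] using hwd,
            by simp [List.cons_append, List.append_assoc]⟩

end Dec
end RedundantDel
namespace RedundantDel
variable {α : Type*}
section Dec
variable [DecidableEq α]
set_option linter.unusedSectionVars false
variable {b : α} {x x' : SSym α}

lemma symrev_glue (hne : x.1 ≠ x'.1) {w w₂ : List (SSym α)} (h : SymRev w w₂) :
    SymRev (glue x x' w) (glue x x' w₂) := by
  obtain ⟨p, m, q, u, h1, h2⟩ := h
  by_cases hu : u = x
  · rw [hu] at h1 h2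
    refine ⟨glue x x' p, x' :: glue x x' m ++ [symNeg x'], glue x x' q, x, ?_, ?_⟩
    · rw [h1]
      simp [glue_append, glue_cons, blk_x, blk_nx, List.cons_append, List.append_assoc]
    · rw [h2]
      simp [glue_append, glue_cons, blk_x, blk_nx, revneg_append, revneg_cons,
        revneg_singleton, revneg_glue, symNeg_symNeg, List.cons_append, List.append_assoc]
  · by_cases hu2 : u = symNeg x
    · rw [hu2] at h1 h2
      rw [symNeg_symNeg] at h1 h2
      refine ⟨glue x x' p, symNeg x :: glue x x' m ++ [x], glue x x' q, symNeg x', ?_, ?_⟩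
      · rw [h1]
        simp [glue_append, glue_cons, blk_x, blk_nx, symNeg_symNeg,
          List.cons_append, List.append_assoc]
      · rw [h2]
        simp [glue_append, glue_cons, blk_x, blk_nx, revneg_append, revneg_cons,
          revneg_singleton, revneg_glue, symNeg_symNeg, List.cons_append, List.append_assoc]
    · have h5 : symNeg u ≠ x := fun hh => hu2 (by rw [← hh, symNeg_symNeg])
      have h6 : symNeg u ≠ symNeg x := fun hh => hu (symNeg_inj hh)
      refine ⟨glue x x' p, glue x x' m, glue x x' q, u, ?_, ?_⟩
      · rw [h1]
        simp [glue_append, glue_cons, blk_other x' hu hu2, blk_other x' h5 h6,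
          List.cons_append, List.append_assoc]
      · rw [h2]
        simp [glue_append, glue_cons, blk_other x' hu hu2, blk_other x' h5 h6,
          revneg_glue, List.cons_append, List.append_assoc]

lemma forward_chain (hne : x.1 ≠ x'.1) (hx'b : x'.1 = b) {σ τ : List (SSym α)}
    (h : Relation.ReflTransGen SymRev σ τ) :
    ∀ w, NoB b w → σ = glue x x' w →
    ∃ w', NoB b w' ∧ τ = glue x x' w' ∧ Relation.ReflTransGen SymRev w w' := by
  induction h with
  | refl => intro w hw hσ; exact ⟨w, hw, hσ, Relation.ReflTransGen.refl⟩
  | tail h1 h2 ih =>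
    intro w hw hσ
    obtain ⟨w', hw', hg', hc⟩ := ih w hw hσ
    obtain ⟨w₂, hw₂, hg₂, hstep⟩ := step_glued hne hx'b hw' hg' h2
    exact ⟨w₂, hw₂, hg₂, hc.tail hstep⟩

lemma lift_chain (hne : x.1 ≠ x'.1) {w w' : List (SSym α)}
    (h : Relation.ReflTransGen SymRev w w') :
    Relation.ReflTransGen SymRev (glue x x' w) (glue x x' w') := by
  induction h with
  | refl => exact Relation.ReflTransGen.refl
  | tail h1 h2 ih => exact ih.tail (symrev_glue hne h2)

end Dec
end RedundantDel

open RedundantDel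

/-- deleting a redundant repeat preserves sortability. -/
theorem transformable_iff_delete_redundant [DecidableEq α] (r₀ : α)
    (π τ : List (SSym α)) (hπ : IsChromosome r₀ π) (hτ : IsChromosome r₀ τ)
    (hA : adjMS π = adjMS τ)
    (hdpπ : ∀ c, dpCount c π ≤ 2) (hdpτ : ∀ c, dpCount c τ ≤ 2)
    (a b : α) (hab : a ≠ b) (hbr : b ≠ r₀)
    (p q : List (SSym α)) (x x' : SSym α)
    (hdec : π = p ++ x :: x' :: q) (hxa : x.1 = a) (hx'b : x'.1 = b)
    (hred : (adjMS π).count (adjOf x x') = 2) :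
    (Transformable π τ ↔ Transformable (delSym b π) (delSym b τ)) := by
  have hne : x.1 ≠ x'.1 := by rw [hxa, hx'b]; exact hab
  have hxb : x.1 ≠ b := by rw [hxa]; exact hab
  have Paπ : ∀ u c v, π = u ++ c :: v → c.1 = x.1 → CovA x x' u c v := by
    intro u c v hd hc
    by_contra hnc
    have h1 := countA_lt_a hne (u ++ c :: v).length u v c le_rfl hc hnc
    rw [← hd, hred] at h1
    have h2 := hdpπ x.1
    omega
  have Pbπ : ∀ u c v, π = u ++ c :: v → c.1 = b → CovB x x' u c v := by
    intro u c v hd hc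
    by_contra hnc
    have h1 := countA_lt_b hne hx'b (u ++ c :: v).length u v c le_rfl hc hnc
    rw [← hd, hred] at h1
    have h2 := hdpπ b
    omega
  have hcτ : (adjMS τ).count (adjOf x x') = 2 := by rw [← hA]; exact hred
  have Paτ : ∀ u c v, τ = u ++ c :: v → c.1 = x.1 → CovA x x' u c v := by
    intro u c v hd hc
    by_contra hnc
    have h1 := countA_lt_a hne (u ++ c :: v).length u v c le_rfl hc hnc
    rw [← hd, hcτ] at h1
    have h2 := hdpτ x.1
    omega
  have Pbτ : ∀ u c v, τ = u ++ c :: v → c.1 = b → CovB x x' u c v := by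
    intro u c v hd hc
    by_contra hnc
    have h1 := countA_lt_b hne hx'b (u ++ c :: v).length u v c le_rfl hc hnc
    rw [← hd, hcτ] at h1
    have h2 := hdpτ b
    omega
  obtain ⟨wπ, hwπ, hπg⟩ := laws_to_glued hne hx'b π.length π le_rfl Paπ Pbπ
  obtain ⟨wτ, hwτ, hτg⟩ := laws_to_glued hne hx'b τ.length τ le_rfl Paτ Pbτ
  have hdπ : delSym b π = wπ := by rw [hπg]; exact delSym_glue hxb hx'b hwπ
  have hdτ : delSym b τ = wτ := by rw [hτg]; exact delSym_glue hxb hx'b hwτ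
  constructor
  · intro h
    obtain ⟨w', hw', hg', hc⟩ := forward_chain hne hx'b h wπ hwπ hπg
    have hw'' : delSym b τ = w' := by rw [hg']; exact delSym_glue hxb hx'b hw'
    rw [hdπ, hw'']
    exact hc
  · intro h
    rw [hdπ, hdτ] at h
    have h2 := lift_chain hne h
    rw [← hπg, ← hτg] at h2
    exact h2
end

section
/- Let x and x' be adjacent black vertices of weight 1 in the intersection graph IG(π, τ). Suppose performing the symmetric reversal on x (and deleting x) splits the component into connected components C₁, …, C_m, with x' in component C_j. Then for any vertex y in a component C_i with i ≠ j, the color of y is the same whether we performed the symmetric reversal on x or instead on x'. -/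
open List

variable {α : Type*}

/-- for adjacent black weight-1 vertices `x, x'`, any vertex `y`
lying (after reversing on `x` and deleting `x`) in a component not containing
`x'` gets the same color whether we reverse on `x` or on `x'`. -/
theorem color_preserved_in_other_component {V : Type*} [DecidableEq V]
    (G : ColoredGraph V) (x x' y : V)
    (hsym : ∀ u v, G.adj u v ↔ G.adj v u) (hirr : ∀ u, ¬ G.adj u u)
    (hadj : G.adj x x') (hbx : G.black x) (hbx' : G.black x')
    (hwx : G.weight x = 1) (hwx' : G.weight x' = 1)
    (hyx : y ≠ x) (hx'x : x' ≠ x)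
    (hsep : ¬ Reach (reverseAt G x) (· = x) y x') :
    ((reverseAt G x).black y ↔ (reverseAt G x').black y) := by
  have hyx' : y ≠ x' := by rintro rfl; exact hsep Relation.ReflTransGen.refl
  have key : G.adj x y ↔ G.adj x' y := by
    constructor
    · intro h
      by_contra h'
      exact hsep (Relation.ReflTransGen.single
        ⟨Or.inl ⟨h, hadj, fun hc => h' ((hsym x' y).mpr hc), hyx'⟩, hyx, hx'x⟩)
    · intro h
      by_contra h'
      exact hsep (Relation.ReflTransGen.single
        ⟨Or.inr ⟨fun hc => h' hc.1, (hsym x' y).mp h⟩, hyx, hx'x⟩)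
  simp only [reverseAt]
  tauto
end

section
/- Let x and x' be adjacent black vertices of weight 1 in IG(π, τ). Suppose performing the symmetric reversal on x splits the remaining graph into components C₁,…,C_m with x' ∈ C_j. If y, z are vertices of a component C_i with i ≠ j and y, z are adjacent after reversing on x, then y and z are also adjacent after instead reversing on x'. -/
open List

variable {α : Type*}

/-- for adjacent black weight-1 vertices `x, x'`, if `y, z` lie
(after reversing on `x` and deleting `x`) in a common component not containing
`x'` and are adjacent after reversing on `x`, they are also adjacent after
reversing on `x'` instead. -/
theorem adjacency_preserved_in_other_component {V : Type*} [DecidableEq V]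
    (G : ColoredGraph V) (x x' y z : V)
    (hsym : ∀ u v, G.adj u v ↔ G.adj v u) (hirr : ∀ u, ¬ G.adj u u)
    (hadj : G.adj x x') (hbx : G.black x) (hbx' : G.black x')
    (hwx : G.weight x = 1) (hwx' : G.weight x' = 1)
    (hyx : y ≠ x) (hzx : z ≠ x) (hx'x : x' ≠ x)
    (hyz : Reach (reverseAt G x) (· = x) y z)
    (hsep : ¬ Reach (reverseAt G x) (· = x) y x') :
    (reverseAt G x).adj y z → (reverseAt G x').adj y z := by
  intro hAyz
  have hy' : ¬ (reverseAt G x).adj y x' := fun h =>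
    hsep (Relation.ReflTransGen.single ⟨h, hyx, hx'x⟩)
  have hz' : ¬ (reverseAt G x).adj z x' := fun h =>
    hsep (hyz.tail ⟨h, hzx, hx'x⟩)
  have hyne : y ≠ x' := fun h => hsep (h ▸ Relation.ReflTransGen.refl)
  have hzne : z ≠ x' := fun h => hsep (h ▸ hyz)
  have hyz' : y ≠ z := by
    rintro rfl
    rcases hAyz with ⟨_, _, _, h⟩ | ⟨_, h⟩
    · exact h rfl
    · exact hirr y h
  have hs1 := hsym x' y
  have hs2 := hsym x' z
  simp only [reverseAt] at hAyz hy' hz' ⊢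
  by_cases hy : G.adj x y <;> by_cases hz : G.adj x z
  · -- both neighbors of x
    have hny : G.adj y x' := by
      by_contra h
      exact hy' (Or.inl ⟨hy, hadj, h, hyne⟩)
    have hnz : G.adj z x' := by
      by_contra h
      exact hz' (Or.inl ⟨hz, hadj, h, hzne⟩)
    have hnyz : ¬ G.adj y z := by
      rcases hAyz with ⟨_, _, h, _⟩ | ⟨h, _⟩
      · exact h
      · exact absurd ⟨hy, hz⟩ h
    exact Or.inl ⟨hs1.mpr hny, hs2.mpr hnz, hnyz, hyz'⟩
  · -- y neighbor, z not
    have hnz : ¬ G.adj z x' := fun h =>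
      hz' (Or.inr ⟨fun hc => hz hc.1, h⟩)
    have hgyz : G.adj y z := by
      rcases hAyz with ⟨_, h, _, _⟩ | ⟨_, h⟩
      · exact absurd h hz
      · exact h
    exact Or.inr ⟨fun hc => hnz (hs2.mp hc.2), hgyz⟩
  · -- z neighbor, y not
    have hny : ¬ G.adj y x' := fun h =>
      hy' (Or.inr ⟨fun hc => hy hc.1, h⟩)
    have hgyz : G.adj y z := by
      rcases hAyz with ⟨h, _, _, _⟩ | ⟨_, h⟩
      · exact absurd h hy
      · exact h
    exact Or.inr ⟨fun hc => hny (hs1.mp hc.1), hgyz⟩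
  · -- neither neighbor of x
    have hny : ¬ G.adj y x' := fun h =>
      hy' (Or.inr ⟨fun hc => hy hc.1, h⟩)
    have hgyz : G.adj y z := by
      rcases hAyz with ⟨h, _, _, _⟩ | ⟨_, h⟩
      · exact absurd h hy
      · exact h
    exact Or.inr ⟨fun hc => hny (hs1.mp hc.1), hgyz⟩
end

section
/- The two adjacencies neighboring any entangled adjacency always have the same direction (both positive or both negative). -/
open List

variable {α : Type*}

lemma symNeg_ne (x : SSym α) : symNeg x ≠ x := by simp [symNeg, Prod.ext_iff]
lemma adjOf_eq (u v : SSym α) : adjOf u v = {symNeg u, v} := rfl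

lemma pair_eq' {β : Type*} [DecidableEq β] {a b c d : β}
    (h : ({a, b} : Multiset β) = {c, d}) :
    (a = c ∧ b = d) ∨ (a = d ∧ b = c) := by
  have hmem : a ∈ ({c, d} : Multiset β) := by rw [← h]; simp
  simp only [Multiset.insert_eq_cons, Multiset.mem_cons, Multiset.mem_singleton] at hmem
  rcases hmem with rfl | rfl
  · left
    refine ⟨rfl, ?_⟩
    have h2 := congrArg (Multiset.count b) h
    simp only [Multiset.insert_eq_cons, Multiset.count_cons, Multiset.count_singleton] at h2
    split_ifs at h2 with h1 h3 <;> simp_all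
  · right
    refine ⟨rfl, ?_⟩
    have h2 := congrArg (Multiset.count b) h
    simp only [Multiset.insert_eq_cons, Multiset.count_cons, Multiset.count_singleton] at h2
    split_ifs at h2 with h1 h3 <;> simp_all


section
variable [DecidableEq α]

lemma adjMS_count_le_cons (a : SSym α) (l : List (SSym α)) (A : Multiset (SSym α)) :
    (adjMS l).count A ≤ (adjMS (a :: l)).count A := by
  cases l with
  | nil => simp [adjMS]
  | cons b l' =>
    show (adjMS (b :: l')).count A ≤ (adjOf a b ::ₘ adjMS (b :: l')).count A
    simp only [Multiset.count_cons]
    split <;> omega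

lemma one_le_count_adjMS (p q : List (SSym α)) (x y : SSym α) :
    1 ≤ (adjMS (p ++ x :: y :: q)).count (adjOf x y) := by
  induction p with
  | nil =>
    show 1 ≤ (adjOf x y ::ₘ adjMS (y :: q)).count (adjOf x y)
    simp [Multiset.count_cons]
  | cons a p' ih =>
    calc 1 ≤ (adjMS (p' ++ x :: y :: q)).count (adjOf x y) := ih
    _ ≤ _ := adjMS_count_le_cons a _ _

lemma simple_cons {a : SSym α} {l : List (SSym α)} (h : Simple (a :: l)) : Simple l :=
  fun A => le_trans (adjMS_count_le_cons a l A) (h A)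

lemma adjMS_count_cc (x y : SSym α) (q : List (SSym α)) :
    (adjMS (x :: y :: q)).count (adjOf x y)
      = 1 + (adjMS (y :: q)).count (adjOf x y) := by
  show (adjOf x y ::ₘ adjMS (y :: q)).count (adjOf x y) = _
  rw [Multiset.count_cons_self]
  omega

lemma simple_len_eq :
    ∀ (p₁ : List (SSym α)) (τ p₂ q₁ q₂ : List (SSym α)) (x₁ y₁ x₂ y₂ : SSym α),
    Simple τ → τ = p₁ ++ x₁ :: y₁ :: q₁ → τ = p₂ ++ x₂ :: y₂ :: q₂ →
    adjOf x₁ y₁ = adjOf x₂ y₂ → p₁.length = p₂.length := by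
  intro p₁
  induction p₁ with
  | nil =>
    intro τ p₂ q₁ q₂ x₁ y₁ x₂ y₂ hs h1 h2 he
    cases p₂ with
    | nil => rfl
    | cons b p₂' =>
      exfalso
      rw [h1] at h2 hs
      simp only [nil_append, cons_append] at h2 hs
      injection h2 with hb ht
      have hc : 1 ≤ (adjMS (y₁ :: q₁)).count (adjOf x₂ y₂) := by
        rw [ht]; exact one_le_count_adjMS _ _ _ _
      have h3 := hs (adjOf x₂ y₂)
      have hcc := adjMS_count_cc x₁ y₁ q₁
      rw [he] at hcc
      omega
  | cons a p₁' ih =>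
    intro τ p₂ q₁ q₂ x₁ y₁ x₂ y₂ hs h1 h2 he
    cases p₂ with
    | nil =>
      exfalso
      rw [h2] at h1 hs
      simp only [nil_append, cons_append] at h1 hs
      injection h1 with hb ht
      have hc : 1 ≤ (adjMS (y₂ :: q₂)).count (adjOf x₂ y₂) := by
        rw [ht, ← he]; exact one_le_count_adjMS _ _ _ _
      have h3 := hs (adjOf x₂ y₂)
      have hcc := adjMS_count_cc x₂ y₂ q₂
      omega
    | cons b p₂' =>
      rw [h1] at h2 hs
      simp only [cons_append] at h2 hs
      injection h2 with hb ht
      have hs' : Simple (p₁' ++ x₁ :: y₁ :: q₁) := simple_cons hs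
      simpa using congrArg Nat.succ (ih _ p₂' q₁ q₂ x₁ y₁ x₂ y₂ hs' rfl ht he)

lemma decomp_of_mem_adjMS :
    ∀ (l : List (SSym α)) (A : Multiset (SSym α)), A ∈ adjMS l →
    ∃ p q x y, l = p ++ x :: y :: q ∧ A = adjOf x y := by
  intro l
  induction l with
  | nil => intro A h; simp [adjMS] at h
  | cons a t ih =>
    intro A h
    cases t with
    | nil => simp [adjMS] at h
    | cons b rest =>
      rcases Multiset.mem_cons.mp h with rfl | h'
      · exact ⟨[], rest, a, b, rfl, rfl⟩
      · obtain ⟨p, q, x, y, hl, hA⟩ := ih A h'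
        exact ⟨a :: p, q, x, y, by simp [hl], hA⟩

lemma count_one_decomp_eq :
    ∀ (p₁ : List (SSym α)) (l p₂ q₁ q₂ : List (SSym α)) (x : SSym α),
    l.count x = 1 → l = p₁ ++ x :: q₁ → l = p₂ ++ x :: q₂ → p₁ = p₂ ∧ q₁ = q₂ := by
  intro p₁
  induction p₁ with
  | nil =>
    intro l p₂ q₁ q₂ x hc h1 h2
    cases p₂ with
    | nil =>
      rw [h1] at h2; simp only [nil_append] at h2
      injection h2 with _ ht
      exact ⟨rfl, ht⟩
    | cons b p₂' =>
      exfalso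
      rw [h1] at h2 hc
      simp only [nil_append, cons_append] at h2 hc
      injection h2 with hb ht
      rw [List.count_cons_self] at hc
      have hm : x ∈ p₂' ++ x :: q₂ := by simp
      rw [← ht] at hm
      have := List.count_pos_iff.mpr hm
      omega
  | cons a p₁' ih =>
    intro l p₂ q₁ q₂ x hc h1 h2
    cases p₂ with
    | nil =>
      exfalso
      rw [h2] at h1 hc
      simp only [nil_append, cons_append] at h1 hc
      injection h1 with hb ht
      rw [List.count_cons_self] at hc
      have hm : x ∈ p₁' ++ x :: q₁ := by simp
      rw [← ht] at hm
      have := List.count_pos_iff.mpr hm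
      omega
    | cons b p₂' =>
      rw [h1] at h2 hc
      simp only [cons_append] at h2 hc
      injection h2 with hb ht
      have hx : a ≠ x := by
        intro h
        rw [h, List.count_cons_self] at hc
        have hm : x ∈ p₁' ++ x :: q₁ := by simp
        have := List.count_pos_iff.mpr hm
        omega
      rw [List.count_cons_of_ne hx] at hc
      obtain ⟨he1, he2⟩ := ih _ p₂' q₁ q₂ x hc rfl ht
      exact ⟨by rw [hb, he1], he2⟩
end

/-- the two adjacencies neighboring any entangled adjacency
have the same direction. -/
theorem entangled_neighbors_same_direction [DecidableEq α] (r₀ : α)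
    (π τ : List (SSym α)) (hπ : IsChromosome r₀ π) (hτ : IsChromosome r₀ τ)
    (hs : Simple π) (hst : Simple τ) (hrel : Related π τ)
    (hdpπ : ∀ c, dpCount c π ≤ 2) (hdpτ : ∀ c, dpCount c τ ≤ 2)
    (hbal : BalancedTarget τ) (hA : adjMS π = adjMS τ)
    (p q : List (SSym α)) (w u v z : SSym α)
    (hdec : π = p ++ w :: u :: v :: z :: q)
    (hent : EntangledAdj τ u v) :
    (PosIn τ w u ↔ PosIn τ v z) ∧ (NegIn τ w u ↔ NegIn τ v z) := by
  classical
  obtain ⟨hpos, hneg⟩ := hent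
  obtain ⟨P, Q, hPQ⟩ := hpos
  obtain ⟨P₂, Q₂, hPQ₂⟩ := hneg
  -- Step A: v = symNeg u
  have hadj : adjOf u v = adjOf (symNeg v) (symNeg u) := by
    rw [adjOf_eq, adjOf_eq, symNeg_symNeg]
    exact Multiset.pair_comm _ _
  have hlen := simple_len_eq P τ P₂ Q Q₂ u v (symNeg v) (symNeg u) hst hPQ hPQ₂ hadj
  have happ : P ++ u :: v :: Q = P₂ ++ symNeg v :: symNeg u :: Q₂ := by
    rw [← hPQ, ← hPQ₂]
  obtain ⟨hPeq, hrest⟩ := List.append_inj happ hlen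
  injection hrest with h1 hrest
  injection hrest with h2 hQeq
  -- h1 : u = symNeg v, h2 : v = symNeg u
  have hvu : symNeg u = v := h2.symm
  have huv : u ≠ v := by rw [h2]; exact (symNeg_ne u).symm
  have hva1 : v.1 = u.1 := by rw [h2]; rfl
  -- dpCount facts
  have hge : 2 ≤ dpCount u.1 π := by
    rw [hdec]
    simp [dpCount, List.count_append, List.count_cons, hva1]
    omega
  have hd2 : dpCount u.1 τ = 2 := by
    have := hdpπ u.1
    have hr := hrel u.1
    omega
  -- uniqueness of occurrences of u and v in τ
  have hcnt : τ.count u = 1 ∧ τ.count v = 1 := by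
    rw [hPQ]
    rw [hPQ] at hd2
    simp only [dpCount, List.map_append, List.map_cons, List.count_append,
      List.count_cons] at hd2
    simp only [hva1, beq_self_eq_true, if_true, if_pos rfl] at hd2
    have hPz : (P.map Prod.fst).count u.1 = 0 := by omega
    have hQz : (Q.map Prod.fst).count u.1 = 0 := by omega
    have huP : u ∉ P := fun h => by
      have := List.count_pos_iff.mpr (List.mem_map_of_mem (f := Prod.fst) h)
      omega
    have huQ : u ∉ Q := fun h => by
      have := List.count_pos_iff.mpr (List.mem_map_of_mem (f := Prod.fst) h)
      omega
    have hvP : v ∉ P := fun h => by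
      have := List.count_pos_iff.mpr (List.mem_map_of_mem (f := Prod.fst) h)
      rw [hva1] at this
      omega
    have hvQ : v ∉ Q := fun h => by
      have := List.count_pos_iff.mpr (List.mem_map_of_mem (f := Prod.fst) h)
      rw [hva1] at this
      omega
    constructor <;> simp [List.count_append, List.count_cons,
      List.count_eq_zero.mpr huP, List.count_eq_zero.mpr huQ,
      List.count_eq_zero.mpr hvP, List.count_eq_zero.mpr hvQ, huv, Ne.symm huv]
  obtain ⟨hcu, hcv⟩ := hcnt
  have hdecu : τ = P ++ u :: (v :: Q) := hPQ
  have hdecv : τ = (P ++ [u]) ++ v :: Q := by rw [hPQ]; simp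
  -- z ≠ symNeg w (from Simple π)
  have hzw : z ≠ symNeg w := by
    intro h
    have he : adjOf w u = adjOf v z := by
      rw [adjOf_eq, adjOf_eq, ← h1, h]
      exact Multiset.pair_comm _ _
    have h1d : π = p ++ w :: u :: (v :: z :: q) := hdec
    have h2d : π = (p ++ [w, u]) ++ v :: z :: q := by rw [hdec]; simp
    have := simple_len_eq p π (p ++ [w, u]) (v :: z :: q) q w u v z hs h1d h2d he
    simp at this
  -- disjunction for ⟨w, u⟩
  have hdisj1 : PosIn τ w u ∨ NegIn τ w u := by
    have hm : adjOf w u ∈ adjMS τ := by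
      rw [← hA]
      have h1d : π = p ++ w :: u :: (v :: z :: q) := hdec
      have := one_le_count_adjMS p (v :: z :: q) w u
      rw [← h1d] at this
      exact Multiset.count_pos.mp (by omega)
    obtain ⟨p', q', t₁, t₂, hτd, hAe⟩ := decomp_of_mem_adjMS τ _ hm
    rw [adjOf_eq, adjOf_eq] at hAe
    rcases pair_eq' hAe with ⟨hA1, hA2⟩ | ⟨hA1, hA2⟩
    · left
      have ht1 : t₁ = w := by
        have := congrArg symNeg hA1
        rw [symNeg_symNeg, symNeg_symNeg] at this
        exact this.symm
      exact ⟨p', q', by rw [hτd, ht1, hA2]⟩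
    · right
      have ht1 : t₁ = symNeg u := by
        have := congrArg symNeg hA2
        rw [symNeg_symNeg] at this
        exact this.symm
      exact ⟨p', q', by rw [hτd, ht1, hA1]⟩
  -- disjunction for ⟨v, z⟩
  have hdisj2 : PosIn τ v z ∨ NegIn τ v z := by
    have hm : adjOf v z ∈ adjMS τ := by
      rw [← hA]
      have h2d : π = (p ++ [w, u]) ++ v :: z :: q := by rw [hdec]; simp
      have := one_le_count_adjMS (p ++ [w, u]) q v z
      rw [← h2d] at this
      exact Multiset.count_pos.mp (by omega)
    obtain ⟨p', q', t₁, t₂, hτd, hAe⟩ := decomp_of_mem_adjMS τ _ hm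
    rw [adjOf_eq, adjOf_eq] at hAe
    rcases pair_eq' hAe with ⟨hA1, hA2⟩ | ⟨hA1, hA2⟩
    · left
      have ht1 : t₁ = v := by
        have := congrArg symNeg hA1
        rw [symNeg_symNeg, symNeg_symNeg] at this
        exact this.symm
      exact ⟨p', q', by rw [hτd, ht1, hA2]⟩
    · right
      have ht1 : t₁ = symNeg z := by
        have := congrArg symNeg hA2
        rw [symNeg_symNeg] at this
        exact this.symm
      exact ⟨p', q', by rw [hτd, ht1, hA1]⟩
  -- exclusion 1
  have hE1 : ¬(PosIn τ w u ∧ NegIn τ v z) := by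
    rintro ⟨⟨p₁, q₁, hp1⟩, ⟨p₃, q₃, hp3⟩⟩
    have hd1 : τ = (p₁ ++ [w]) ++ u :: q₁ := by rw [hp1]; simp
    have hd3 : τ = (p₃ ++ [symNeg z]) ++ u :: q₃ := by
      rw [hp3, ← h1]; simp
    obtain ⟨e1, _⟩ := count_one_decomp_eq (p₁ ++ [w]) τ P q₁ (v :: Q) u hcu hd1 hdecu
    obtain ⟨e3, _⟩ := count_one_decomp_eq (p₃ ++ [symNeg z]) τ P q₃ (v :: Q) u hcu hd3 hdecu
    have : p₁ ++ [w] = p₃ ++ [symNeg z] := by rw [e1, e3]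
    have hw : w = symNeg z := by
      have := (List.append_inj' this rfl).2
      injection this
    apply hzw
    rw [hw, symNeg_symNeg]
  -- exclusion 2
  have hE2 : ¬(NegIn τ w u ∧ PosIn τ v z) := by
    rintro ⟨⟨p₂, q₂, hp2⟩, ⟨p₄, q₄, hp4⟩⟩
    have hd2' : τ = p₂ ++ v :: (symNeg w :: q₂) := by rw [hp2, hvu]
    obtain ⟨_, e2⟩ := count_one_decomp_eq p₂ τ (P ++ [u]) (symNeg w :: q₂) Q v hcv hd2' hdecv
    obtain ⟨_, e4⟩ := count_one_decomp_eq p₄ τ (P ++ [u]) (z :: q₄) Q v hcv hp4 hdecv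
    have : symNeg w :: q₂ = z :: q₄ := by rw [e2, e4]
    injection this with hz _
    exact hzw hz.symm
  refine ⟨⟨fun hp => ?_, fun hp => ?_⟩, ⟨fun hn => ?_, fun hn => ?_⟩⟩
  · rcases hdisj2 with h | h
    · exact h
    · exact absurd ⟨hp, h⟩ hE1
  · rcases hdisj1 with h | h
    · exact h
    · exact absurd ⟨h, hp⟩ hE2
  · rcases hdisj2 with h | h
    · exact absurd ⟨hn, h⟩ hE2
    · exact h
  · rcases hdisj1 with h | h
    · exact absurd ⟨h, hn⟩ hE1
    · exact h
end

section
/- In the 2-balanced case, π equals τ if and only if π contains no maximal negative segment, i.e., N_MNS[π] = 0 (equivalently, every adjacency of π is positive). -/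
open List

variable {α : Type*}

lemma adjMS_card : ∀ (l : List (SSym α)), Multiset.card (adjMS l) = l.length - 1
  | [] => rfl
  | [_] => rfl
  | u :: v :: rest => by
      have := adjMS_card (v :: rest)
      simp [adjMS, this]

lemma bal_tail {z : SSym α} {t : List (SSym α)}
    (h : BalancedTarget (z :: t)) : BalancedTarget t := by
  intro p q r x y hpq hx
  exact h (z :: p) q r x y (by rw [hpq]; rfl) hx

lemma bal_nodup : ∀ (τ : List (SSym α)), BalancedTarget τ → τ.Nodup
  | [], _ => List.nodup_nil
  | z :: t, h => by
    refine List.nodup_cons.2 ⟨?_, bal_nodup t (bal_tail h)⟩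
    intro hz
    obtain ⟨q, r, rfl⟩ := List.append_of_mem hz
    exact (h [] q r z z rfl rfl) rfl

lemma decomp_at (l : List (SSym α)) (i : ℕ) (h : i + 1 < l.length) :
    l = l.take i ++ l[i] :: l[i+1] :: l.drop (i + 2) := by
  have h1 : i < l.length := Nat.lt_of_succ_lt h
  conv_lhs => rw [← List.take_append_drop i l]
  rw [List.drop_eq_getElem_cons h1, List.drop_eq_getElem_cons h]

/-- in the 2-balanced case, `π = τ` iff every adjacency of `π`
is positive (equivalently `N_MNS[π] = 0`). -/
theorem eq_iff_no_negative_adjacency [DecidableEq α] (r₀ : α)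
    (π τ : List (SSym α)) (hπ : IsChromosome r₀ π) (hτ : IsChromosome r₀ τ)
    (hs : Simple π) (hst : Simple τ) (hrel : Related π τ)
    (hdpπ : ∀ c, dpCount c π ≤ 2) (hdpτ : ∀ c, dpCount c τ ≤ 2)
    (hbal : BalancedTarget τ) (hA : adjMS π = adjMS τ) :
    π = τ ↔ (∀ (p q : List (SSym α)) (u v : SSym α),
      π = p ++ u :: v :: q → PosIn τ u v) := by
  constructor
  · rintro rfl p q u v hpq
    exact ⟨p, q, hpq⟩
  · intro hpos
    -- lengths are equal
    obtain ⟨mπ, hπe⟩ := hπ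
    obtain ⟨mτ, hτe⟩ := hτ
    have hcard : Multiset.card (adjMS π) = Multiset.card (adjMS τ) := by rw [hA]
    rw [adjMS_card, adjMS_card] at hcard
    have hπlen : 1 ≤ π.length := by rw [hπe]; simp
    have hτlen : 1 ≤ τ.length := by rw [hτe]; simp
    have hlen : π.length = τ.length := by omega
    have hnd : τ.Nodup := bal_nodup τ hbal
    -- main induction
    have key : ∀ i, ∀ h : i < π.length, π[i] = τ[i]'(hlen ▸ h) := by
      intro i
      induction i with
      | zero =>
        intro h
        have h0π : π[0]'h = (r₀, true) := by
          simp [hπe]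
        have h0τ : τ[0]'(hlen ▸ h) = (r₀, true) := by
          simp [hτe]
        rw [h0π, h0τ]
      | succ i ih =>
        intro h
        have hi : i < π.length := Nat.lt_of_succ_lt h
        have hIH := ih hi
        have hdec := decomp_at π i h
        obtain ⟨p', q', hτdec⟩ := hpos (π.take i) (π.drop (i + 2)) (π[i]) (π[i+1]) hdec
        have hplen : p'.length < τ.length := by
          rw [hτdec]; simp
        have hval? : τ[p'.length]? = some (π[i]'hi) := by
          rw [hτdec, List.getElem?_append_right (le_refl _)]
          simp
        have hval : τ[p'.length]'hplen = π[i]'hi := by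
          have := List.getElem?_eq_getElem hplen
          rw [hval?] at this
          exact (Option.some_inj.1 this).symm
        have hieq : p'.length = i := by
          have hiτ : i < τ.length := hlen ▸ hi
          have : τ[p'.length]'hplen = τ[i]'hiτ := by rw [hval, hIH]
          exact (List.Nodup.getElem_inj_iff hnd).1 this
        have hplen1 : p'.length + 1 < τ.length := by
          rw [hτdec]; simp
        have hval1? : τ[p'.length + 1]? = some (π[i+1]'h) := by
          rw [hτdec, List.getElem?_append_right (by omega)]
          simp [Nat.sub_self, Nat.add_sub_cancel_left]
        have hval1 : τ[p'.length + 1]'hplen1 = π[i+1]'h := by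
          have := List.getElem?_eq_getElem hplen1
          rw [hval1?] at this
          exact (Option.some_inj.1 this).symm
        rw [← hval1]
        congr 1
        omega
    apply List.ext_getElem hlen
    intro i h1 h2
    exact key i h1
end
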